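/- arXiv:1608.07199 — 3 statements merged into one kernel-verified Lean document; each statement's English description precedes it below -/
import Mathlib

section
/- Let ω be a locally finite nonnegative Borel measure on ℝ^n, let p ∈ (1,∞), and let 𝒢 ⊆ 𝒟 be a countable family of dyadic cubes such that ∑_{G'∈𝒢, G'⊆G} ω(G') ≤ 2 ω(G) for every G ∈ 𝒢. Then there is a constant C_p depending only on p such that ∑_{G∈𝒢} (⟨h⟩_G^ω)^p ω(G) ≤ C_p ∫_{ℝ^n} h^p dω for every nonnegative Borel function h on ℝ^n. -/
open MeasureTheory ENNReal Set
open scoped Classical NNReal ENNReal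

noncomputable section

/-- The index of a dyadic cube `2^{-k}([0,1)^n + m)` of the standard dyadic lattice `𝒟`. -/
abbrev CubeIdx (n : ℕ) := ℤ × (Fin n → ℤ)

/-- The dyadic cube `2^{-k}([0,1)^n + m)`. -/
def dyadicCube (n : ℕ) (k : ℤ) (m : Fin n → ℤ) : Set (Fin n → ℝ) :=
  {x | ∀ i, x i ∈ Set.Ico ((2:ℝ) ^ (-k) * (m i : ℝ)) ((2:ℝ) ^ (-k) * ((m i : ℝ) + 1))}

/-- The dyadic cube associated to an index. -/
def idxCube (n : ℕ) (Q : CubeIdx n) : Set (Fin n → ℝ) := dyadicCube n Q.1 Q.2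

/-- The Carleson box `Q̂ = Q × (0, ℓ(Q)]`, where `ℓ(Q) = 2^{-k}`. -/
def carlesonBox (n : ℕ) (k : ℤ) (m : Fin n → ℤ) : Set ((Fin n → ℝ) × ℝ) :=
  (dyadicCube n k m) ×ˢ (Set.Ioc (0:ℝ) ((2:ℝ) ^ (-k)))

/-- The vertical `ℓ²`-norm `|f|_{ℓ²}(x) = (∑_{k ∈ ℤ} f(x, 2^{-k})²)^{1/2}`. -/
def vertL2 (n : ℕ) (f : (Fin n → ℝ) × ℝ → ℝ≥0∞) (x : Fin n → ℝ) : ℝ≥0∞ :=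
  (∑' k : ℤ, (f (x, (2:ℝ) ^ (-k))) ^ 2) ^ (1/2 : ℝ)

/-- The mixed norm `‖f‖_{L^q(σ; ℓ²)} = (∫ |f|_{ℓ²}^q dσ)^{1/q}`. -/
def mixedNorm (n : ℕ) (σ : Measure (Fin n → ℝ)) (q : ℝ)
    (f : (Fin n → ℝ) × ℝ → ℝ≥0∞) : ℝ≥0∞ :=
  (∫⁻ x, (vertL2 n f x) ^ q ∂σ) ^ (1/q)

/-- The norm `‖g‖_{L^q(ω)} = (∫ g^q dω)^{1/q}` of a nonnegative function. -/
def lpNorm (n : ℕ) (ω : Measure (Fin n → ℝ)) (q : ℝ) (g : (Fin n → ℝ) → ℝ≥0∞) : ℝ≥0∞ :=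
  (∫⁻ x, (g x) ^ q ∂ω) ^ (1/q)

/-- `∬_{Q̂} f μ dη dσ = ∑_{j ∈ ℤ, 2^j ≤ ℓ(Q)} ∫_Q f(x, 2^j) μ(x, 2^j) dσ(x)`. -/
def boxInt (n : ℕ) (σ : Measure (Fin n → ℝ)) (μ : (Fin n → ℝ) × ℝ → ℝ≥0∞)
    (f : (Fin n → ℝ) × ℝ → ℝ≥0∞) (k : ℤ) (m : Fin n → ℤ) : ℝ≥0∞ :=
  ∑' j : ℤ, if (2:ℝ) ^ j ≤ (2:ℝ) ^ (-k) then
      ∫⁻ x in dyadicCube n k m, f (x, (2:ℝ) ^ j) * μ (x, (2:ℝ) ^ j) ∂σ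
    else 0

/-- `1_{Q̂} μ`. -/
def boxFn (n : ℕ) (μ : (Fin n → ℝ) × ℝ → ℝ≥0∞) (k : ℤ) (m : Fin n → ℤ) :
    (Fin n → ℝ) × ℝ → ℝ≥0∞ :=
  (carlesonBox n k m).indicator μ

/-- The test function `φ_Q = |1_{Q̂} μ|_{ℓ²}^{p'-2} 1_{Q̂} μ`,
interpreted as `0` where `|1_{Q̂} μ|_{ℓ²} = 0`. -/
def testFn (n : ℕ) (p' : ℝ) (μ : (Fin n → ℝ) × ℝ → ℝ≥0∞) (k : ℤ) (m : Fin n → ℤ) :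
    (Fin n → ℝ) × ℝ → ℝ≥0∞ :=
  fun z => if vertL2 n (boxFn n μ k m) z.1 = 0 then 0
    else (vertL2 n (boxFn n μ k m) z.1) ^ (p' - 2) * boxFn n μ k m z

/-- The bilinear form `Λ(f,g) = ∑_{Q ∈ 𝒟} λ_Q (∬_{Q̂} f μ dη dσ) (∫_Q g dω)`. -/
def lambdaForm (n : ℕ) (σ ω : Measure (Fin n → ℝ)) (μ : (Fin n → ℝ) × ℝ → ℝ≥0∞)
    (lam : CubeIdx n → ℝ≥0) (f : (Fin n → ℝ) × ℝ → ℝ≥0∞) (g : (Fin n → ℝ) → ℝ≥0∞) :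
    ℝ≥0∞ :=
  ∑' Q : CubeIdx n,
    (lam Q : ℝ≥0∞) * boxInt n σ μ f Q.1 Q.2 * ∫⁻ x in idxCube n Q, g x ∂ω

/-- The localized bilinear form `Λ_{Q₀}(f,g)`, where the sum is restricted to
dyadic cubes `Q ⊆ Q₀`. -/
def lambdaLoc (n : ℕ) (σ ω : Measure (Fin n → ℝ)) (μ : (Fin n → ℝ) × ℝ → ℝ≥0∞)
    (lam : CubeIdx n → ℝ≥0) (Q₀ : CubeIdx n)
    (f : (Fin n → ℝ) × ℝ → ℝ≥0∞) (g : (Fin n → ℝ) → ℝ≥0∞) : ℝ≥0∞ :=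
  ∑' Q : CubeIdx n, if idxCube n Q ⊆ idxCube n Q₀ then
      (lam Q : ℝ≥0∞) * boxInt n σ μ f Q.1 Q.2 * ∫⁻ x in idxCube n Q, g x ∂ω
    else 0

/-- The average `⟨h⟩_Q^ν = ν(Q)⁻¹ ∫_Q h dν`, understood as `0` when `ν(Q) = 0`. -/
def cubeAvg (n : ℕ) (ν : Measure (Fin n → ℝ)) (h : (Fin n → ℝ) → ℝ≥0∞)
    (k : ℤ) (m : Fin n → ℤ) : ℝ≥0∞ :=
  (∫⁻ x in dyadicCube n k m, h x ∂ν) / ν (dyadicCube n k m)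


namespace Carl

variable {n : ℕ}

lemma measurableSet_dyadicCube (n : ℕ) (k : ℤ) (m : Fin n → ℤ) :
    MeasurableSet (dyadicCube n k m) := by
  have : dyadicCube n k m =
      Set.pi Set.univ (fun i => Set.Ico ((2:ℝ)^(-k) * (m i : ℝ)) ((2:ℝ)^(-k) * ((m i:ℝ) + 1))) := by
    ext x; simp [dyadicCube, Set.mem_pi]
  rw [this]
  exact MeasurableSet.univ_pi fun i => measurableSet_Ico

lemma corner_mem (k : ℤ) (m : Fin n → ℤ) :
    (fun i => (2:ℝ)^(-k) * (m i : ℝ)) ∈ dyadicCube n k m := by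
  intro i
  refine ⟨le_refl _, ?_⟩
  have h2 : (0:ℝ) < 2 ^ (-k) := zpow_pos two_pos _
  have : (m i : ℝ) < (m i : ℝ) + 1 := by linarith
  exact mul_lt_mul_of_pos_left this h2

lemma Ico_subset_1d {k k' : ℤ} (hkk : k ≤ k') {a b : ℤ} {x : ℝ}
    (hx1 : (2:ℝ)^(-k) * a ≤ x) (hx2 : x < (2:ℝ)^(-k) * ((a:ℝ)+1))
    (hy1 : (2:ℝ)^(-k') * b ≤ x) (hy2 : x < (2:ℝ)^(-k') * ((b:ℝ)+1)) :
    Set.Ico ((2:ℝ)^(-k') * b) ((2:ℝ)^(-k') * ((b:ℝ)+1)) ⊆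
      Set.Ico ((2:ℝ)^(-k) * a) ((2:ℝ)^(-k) * ((a:ℝ)+1)) := by
  have hl : (0:ℝ) < 2 ^ (-k') := zpow_pos two_pos _
  set d : ℤ := k' - k with hd
  have hd0 : 0 ≤ d := by omega
  set D : ℤ := 2 ^ d.toNat with hD
  have hcast : (2:ℝ)^(-k) = 2^(-k') * (D : ℝ) := by
    rw [hD]
    push_cast
    rw [← zpow_natCast (2:ℝ) d.toNat, Int.toNat_of_nonneg hd0, ← zpow_add₀ (two_ne_zero) (-k') d]
    congr 1; omega
  -- rewrite the bounds
  rw [hcast] at hx1 hx2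
  have hDa_le_b : D * a ≤ b := by
    have h1 : (2:ℝ)^(-k') * ((D:ℝ) * a) ≤ x := by rw [← mul_assoc]; exact hx1
    have h2 : (2:ℝ)^(-k') * ((D:ℝ) * a) < 2^(-k') * ((b:ℝ)+1) := lt_of_le_of_lt h1 hy2
    have := (mul_lt_mul_iff_right₀ hl).mp h2
    have : ((D * a : ℤ) : ℝ) < ((b + 1 : ℤ) : ℝ) := by push_cast; push_cast at this; linarith
    have := Int.cast_lt.mp this
    omega
  have hb1_le : b + 1 ≤ D * ((a:ℤ) + 1) := by
    have h1 : (2:ℝ)^(-k') * (b:ℝ) < 2^(-k') * ((D:ℝ) * ((a:ℝ)+1)) := by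
      rw [← mul_assoc]; exact lt_of_le_of_lt hy1 hx2
    have := (mul_lt_mul_iff_right₀ hl).mp h1
    have : ((b:ℤ):ℝ) < ((D * (a+1) : ℤ) : ℝ) := by push_cast; push_cast at this; linarith
    have := Int.cast_lt.mp this
    omega
  apply Set.Ico_subset_Ico
  · rw [hcast, mul_assoc]
    apply mul_le_mul_of_nonneg_left _ hl.le
    exact_mod_cast Int.cast_le.mpr hDa_le_b
  · rw [hcast, mul_assoc]
    apply mul_le_mul_of_nonneg_left _ hl.le
    have : ((b+1 : ℤ):ℝ) ≤ ((D * (a+1) : ℤ):ℝ) := Int.cast_le.mpr hb1_le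
    push_cast at this ⊢; linarith

lemma cube_subset_of_mem {k k' : ℤ} {m m' : Fin n → ℤ} (hkk : k ≤ k') {x : Fin n → ℝ}
    (hx : x ∈ dyadicCube n k m) (hx' : x ∈ dyadicCube n k' m') :
    dyadicCube n k' m' ⊆ dyadicCube n k m := by
  intro y hy i
  exact Ico_subset_1d hkk (hx i).1 (hx i).2 (hx' i).1 (hx' i).2 (hy i)

lemma nested_or_disjoint (Q Q' : CubeIdx n) :
    idxCube n Q ⊆ idxCube n Q' ∨ idxCube n Q' ⊆ idxCube n Q ∨
      Disjoint (idxCube n Q) (idxCube n Q') := by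
  by_cases hdis : Disjoint (idxCube n Q) (idxCube n Q')
  · exact Or.inr (Or.inr hdis)
  obtain ⟨x, hx, hx'⟩ := Set.not_disjoint_iff.mp hdis
  rcases le_total Q.1 Q'.1 with h | h
  · exact Or.inr (Or.inl (cube_subset_of_mem h hx hx'))
  · exact Or.inl (cube_subset_of_mem h hx' hx)

lemma scale_le_of_subset (hn : 0 < n) {k k' : ℤ} {m m' : Fin n → ℤ}
    (h : dyadicCube n k' m' ⊆ dyadicCube n k m) : k ≤ k' := by
  by_contra hlt
  push_neg at hlt
  have hll : (2:ℝ)^(-k) < 2^(-k') := by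
    apply zpow_lt_zpow_right₀ (by norm_num : (1:ℝ) < 2); omega
  set i0 : Fin n := ⟨0, hn⟩
  set c : Fin n → ℝ := fun i => (2:ℝ)^(-k') * (m' i : ℝ) with hc
  have hcmem : c ∈ dyadicCube n k' m' := corner_mem k' m'
  set y : Fin n → ℝ := Function.update c i0 ((2:ℝ)^(-k') * (m' i0 : ℝ) + 2^(-k)) with hy
  have hymem : y ∈ dyadicCube n k' m' := by
    intro i
    by_cases hi : i = i0
    · subst hi
      rw [hy, Function.update_self]
      constructor
      · have : (0:ℝ) < 2^(-k) := zpow_pos two_pos _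
        linarith
      · rw [mul_add, mul_one]
        linarith
    · rw [hy, Function.update_of_ne hi]
      exact hcmem i
  have h1 := (h hcmem) i0
  have h2 := (h hymem) i0
  rw [hy, Function.update_self] at h2
  have hc0 : c i0 = (2:ℝ)^(-k') * (m' i0 : ℝ) := rfl
  rw [← hc0] at h2
  obtain ⟨ha1, _⟩ := h1
  obtain ⟨_, hb2⟩ := h2
  rw [mul_add, mul_one] at hb2
  linarith

lemma pos_uniq_at_scale {k : ℤ} {m m' : Fin n → ℤ} {x : Fin n → ℝ}
    (hx : x ∈ dyadicCube n k m) (hx' : x ∈ dyadicCube n k m') : m = m' := by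
  funext i
  have h1 := hx i
  have h2 := hx' i
  have hl : (0:ℝ) < 2 ^ (-k) := zpow_pos two_pos _
  have ha : (m i : ℝ) < (m' i : ℝ) + 1 := by
    have := lt_of_le_of_lt h1.1 h2.2
    have := (mul_lt_mul_iff_right₀ hl).mp this
    linarith
  have hb : (m' i : ℝ) < (m i : ℝ) + 1 := by
    have := lt_of_le_of_lt h2.1 h1.2
    have := (mul_lt_mul_iff_right₀ hl).mp this
    linarith
  have ha' : m i < m' i + 1 := by exact_mod_cast (by push_cast; linarith : ((m i : ℝ)) < ((m' i + 1 : ℤ) : ℝ))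
  have hb' : m' i < m i + 1 := by exact_mod_cast (by push_cast; linarith : ((m' i : ℝ)) < ((m i + 1 : ℤ) : ℝ))
  omega

lemma idx_eq_of_subset_same_scale {Q Q' : CubeIdx n}
    (hsub : idxCube n Q ⊆ idxCube n Q') (hk : Q.1 = Q'.1) : Q = Q' := by
  have hc : (fun i => (2:ℝ)^(-Q.1) * (Q.2 i : ℝ)) ∈ idxCube n Q := corner_mem Q.1 Q.2
  have hc' := hsub hc
  rw [idxCube, ← hk] at hc'
  have := pos_uniq_at_scale hc hc'
  exact Prod.ext hk this

end Carl

namespace Carl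

lemma two_rpow_ne_zero (x : ℝ) : ((2:ℝ≥0∞) ^ x) ≠ 0 := by
  simp [ENNReal.rpow_eq_zero_iff]

lemma two_rpow_ne_top (x : ℝ) : ((2:ℝ≥0∞) ^ x) ≠ ∞ := by
  simp [ENNReal.rpow_eq_top_iff]

lemma two_rpow_add (x y : ℝ) : (2:ℝ≥0∞) ^ (x + y) = 2 ^ x * 2 ^ y :=
  ENNReal.rpow_add x y (by norm_num) (by norm_num)

lemma two_rpow_lt_iff {x y : ℝ} : (2:ℝ≥0∞) ^ x < 2 ^ y ↔ x < y := by
  constructor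
  · intro h
    by_contra hc
    push_neg at hc
    exact absurd (ENNReal.rpow_le_rpow_of_exponent_le (by norm_num) hc) (not_le.mpr h)
  · exact fun h => ENNReal.rpow_lt_rpow_of_exponent_lt (by norm_num) (by norm_num) h

lemma two_rpow_le_iff {x y : ℝ} : (2:ℝ≥0∞) ^ x ≤ 2 ^ y ↔ x ≤ y := by
  constructor
  · intro h
    by_contra hc
    push_neg at hc
    exact absurd (ENNReal.rpow_lt_rpow_of_exponent_lt (by norm_num) (by norm_num) hc) (not_lt.mpr h)
  · exact fun h => ENNReal.rpow_le_rpow_of_exponent_le (by norm_num) h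

/-- toReal bracketing : for `0 < a < ∞` there is `L` with `2^L ≤ a < 2^(L+1)`. -/
lemma ennreal_log_bracket {a : ℝ≥0∞} (h0 : a ≠ 0) (ht : a ≠ ∞) :
    ∃ L : ℤ, (2:ℝ≥0∞) ^ ((L:ℝ)) ≤ a ∧ a < 2 ^ (((L:ℝ)) + 1) := by
  set r : ℝ := a.toReal with hr
  have hrpos : 0 < r := ENNReal.toReal_pos h0 ht
  refine ⟨Int.log 2 r, ?_, ?_⟩
  · have h1 : ((2:ℕ):ℝ) ^ (Int.log 2 r) ≤ r := Int.zpow_log_le_self (by norm_num) hrpos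
    have h2 : (2:ℝ≥0∞) ^ ((Int.log 2 r : ℝ)) = ENNReal.ofReal ((2:ℝ) ^ (Int.log 2 r : ℤ)) := by
      rw [show (2:ℝ≥0∞) = ENNReal.ofReal (2:ℝ) by norm_num,
        ENNReal.ofReal_rpow_of_pos (by norm_num), Real.rpow_intCast]
    rw [h2, ← ENNReal.ofReal_toReal ht, ← hr]
    apply ENNReal.ofReal_le_ofReal
    exact_mod_cast h1
  · have h1 : r < ((2:ℕ):ℝ) ^ (Int.log 2 r + 1) := Int.lt_zpow_succ_log_self (by norm_num) r
    have h2 : (2:ℝ≥0∞) ^ ((Int.log 2 r : ℝ) + 1) = ENNReal.ofReal ((2:ℝ) ^ (Int.log 2 r + 1 : ℤ)) := by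
      rw [show (2:ℝ≥0∞) = ENNReal.ofReal (2:ℝ) by norm_num,
        ENNReal.ofReal_rpow_of_pos (by norm_num),
        show ((Int.log 2 r : ℝ) + 1) = ((Int.log 2 r + 1 : ℤ) : ℝ) by push_cast; ring,
        Real.rpow_intCast]
    rw [h2, ← ENNReal.ofReal_toReal ht, ← hr]
    rw [ENNReal.ofReal_lt_ofReal_iff (by positivity)]
    exact_mod_cast h1

/-- `a^p ≤ 2^p * ∑_{j : 2^j < a} 2^{jp}` for all `a : ℝ≥0∞`, `p > 0`. -/
lemma pow_le_dyadic {p : ℝ} (hp : 0 < p) (a : ℝ≥0∞) :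
    a ^ p ≤ (2:ℝ≥0∞) ^ p * ∑' j : ℤ, (if (2:ℝ≥0∞) ^ ((j:ℝ)) < a then (2:ℝ≥0∞) ^ ((j:ℝ) * p) else 0) := by
  rcases eq_or_ne a 0 with rfl | h0
  · simp [ENNReal.zero_rpow_of_pos hp]
  rcases eq_or_ne a ∞ with rfl | ht
  · -- RHS is infinite
    have hsum : (∑' j : ℤ, (if (2:ℝ≥0∞) ^ ((j:ℝ)) < ∞ then (2:ℝ≥0∞) ^ ((j:ℝ) * p) else 0)) = ∞ := by
      rw [eq_top_iff]
      have hinj : Function.Injective (fun i : ℕ => (i : ℤ)) := fun a b h => by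
        simpa using h
      calc (⊤:ℝ≥0∞) = ∑' _ : ℕ, (1:ℝ≥0∞) := (ENNReal.tsum_const_eq_top_of_ne_zero one_ne_zero).symm
        _ ≤ ∑' i : ℕ, (if (2:ℝ≥0∞) ^ (((i:ℤ):ℝ)) < ∞ then (2:ℝ≥0∞) ^ (((i:ℤ):ℝ) * p) else 0) := by
            apply ENNReal.tsum_le_tsum
            intro i
            rw [if_pos ((two_rpow_ne_top _).lt_top)]
            · rw [show (1:ℝ≥0∞) = 2 ^ (0:ℝ) by simp]
              rw [two_rpow_le_iff]
              positivity
        _ ≤ _ := ENNReal.tsum_comp_le_tsum_of_injective hinj _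
    rw [hsum]
    simp [ENNReal.top_rpow_of_pos hp, ENNReal.mul_top (two_rpow_ne_zero p)]
  · obtain ⟨L, hL1, hL2⟩ := ennreal_log_bracket h0 ht
    -- choose j₀ with 2^{j₀} < a ≤ 2^{j₀+1}
    obtain ⟨j₀, hj1, hj2⟩ : ∃ j₀ : ℤ, (2:ℝ≥0∞) ^ ((j₀:ℝ)) < a ∧ a ≤ 2 ^ ((j₀:ℝ) + 1) := by
      rcases lt_or_eq_of_le hL1 with hlt | heq
      · exact ⟨L, hlt, hL2.le⟩
      · refine ⟨L - 1, ?_, ?_⟩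
        · rw [← heq]
          rw [two_rpow_lt_iff]
          push_cast; linarith
        · rw [← heq, two_rpow_le_iff]; push_cast; linarith
    calc a ^ p ≤ ((2:ℝ≥0∞) ^ ((j₀:ℝ) + 1)) ^ p := ENNReal.rpow_le_rpow hj2 hp.le
      _ = (2:ℝ≥0∞) ^ p * (2:ℝ≥0∞) ^ ((j₀:ℝ) * p) := by
          rw [← ENNReal.rpow_mul]
          rw [show ((j₀:ℝ) + 1) * p = p + (j₀:ℝ) * p by ring, two_rpow_add]
      _ ≤ _ := by
          apply mul_le_mul_right
          calc (2:ℝ≥0∞) ^ ((j₀:ℝ) * p) = (if (2:ℝ≥0∞) ^ ((j₀:ℝ)) < a then (2:ℝ≥0∞) ^ ((j₀:ℝ) * p) else 0) := by rw [if_pos hj1]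
            _ ≤ _ := ENNReal.le_tsum j₀

/-- geometric tail: `∑_{j : 2^{j-1} < b} 2^{j(p-1)} ≤ 2^{p-1} K b^{p-1}`. -/
lemma dyadic_tail {p : ℝ} (hp : 1 < p) (b : ℝ≥0∞) :
    (∑' j : ℤ, (if (2:ℝ≥0∞) ^ ((j:ℝ) - 1) < b then (2:ℝ≥0∞) ^ ((j:ℝ) * (p-1)) else 0))
      ≤ (2:ℝ≥0∞) ^ (2 * (p-1)) * (1 - (2:ℝ≥0∞) ^ (-(p-1)))⁻¹ * b ^ (p - 1) := by
  have hp1 : 0 < p - 1 := by linarith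
  rcases eq_or_ne b 0 with rfl | h0
  · simp
  rcases eq_or_ne b ∞ with rfl | ht
  · rw [ENNReal.top_rpow_of_pos hp1]
    rw [ENNReal.mul_top]
    · exact le_top
    · apply mul_ne_zero (two_rpow_ne_zero _)
      simp only [ne_eq, ENNReal.inv_eq_zero]
      intro hcon
      exact (lt_irrefl _ (hcon ▸ (lt_of_le_of_lt tsub_le_self (by norm_num : (1:ℝ≥0∞) < ∞)))).elim
  obtain ⟨L, hL1, hL2⟩ := ennreal_log_bracket h0 ht
  set J : ℤ := L + 1 with hJ
  -- condition implies j ≤ J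
  have hcond : ∀ j : ℤ, (2:ℝ≥0∞) ^ ((j:ℝ) - 1) < b → j ≤ J := by
    intro j hj
    have := lt_trans hj hL2
    rw [two_rpow_lt_iff] at this
    have : (j:ℝ) < (L:ℝ) + 2 := by linarith
    have : j < L + 2 := by exact_mod_cast (by push_cast; linarith : (j:ℝ) < ((L + 2 : ℤ):ℝ))
    omega
  have step1 : (∑' j : ℤ, (if (2:ℝ≥0∞) ^ ((j:ℝ) - 1) < b then (2:ℝ≥0∞) ^ ((j:ℝ) * (p-1)) else 0))
      ≤ ∑' j : ℤ, (if j ≤ J then (2:ℝ≥0∞) ^ ((j:ℝ) * (p-1)) else 0) := by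
    apply ENNReal.tsum_le_tsum
    intro j
    by_cases hc : (2:ℝ≥0∞) ^ ((j:ℝ) - 1) < b
    · rw [if_pos hc, if_pos (hcond j hc)]
    · rw [if_neg hc]; exact zero_le
  have step2 : (∑' j : ℤ, (if j ≤ J then (2:ℝ≥0∞) ^ ((j:ℝ) * (p-1)) else 0))
      = (2:ℝ≥0∞) ^ ((J:ℝ) * (p-1)) * (1 - (2:ℝ≥0∞) ^ (-(p-1)))⁻¹ := by
    have hinj : Function.Injective (fun i : ℕ => J - (i:ℤ)) := by
      intro a b h; simp only at h; omega
    rw [← Function.Injective.tsum_eq hinj ?_]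
    · have : ∀ i : ℕ, (if J - (i:ℤ) ≤ J then (2:ℝ≥0∞) ^ (((J - (i:ℤ) : ℤ):ℝ) * (p-1)) else 0)
          = (2:ℝ≥0∞) ^ ((J:ℝ) * (p-1)) * ((2:ℝ≥0∞) ^ (-(p-1))) ^ i := by
        intro i
        rw [if_pos (by omega)]
        rw [← ENNReal.rpow_natCast ((2:ℝ≥0∞) ^ (-(p-1))) i, ← ENNReal.rpow_mul, ← two_rpow_add]
        congr 1
        push_cast
        ring
      simp_rw [this]
      rw [ENNReal.tsum_mul_left, ENNReal.tsum_geometric]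
    · intro j hj
      simp only [Function.mem_support, ne_eq, not_not] at hj ⊢
      by_contra hcon
      apply hj
      rw [if_neg]
      intro hle
      apply hcon
      rw [Set.mem_range]
      exact ⟨(J - j).toNat, by omega⟩
  have step3 : (2:ℝ≥0∞) ^ ((J:ℝ) * (p-1)) ≤ (2:ℝ≥0∞) ^ (2 * (p-1)) * b ^ (p - 1) := by
    have : (2:ℝ≥0∞) ^ ((L:ℝ) * (p-1)) ≤ b ^ (p-1) := by
      rw [ENNReal.rpow_mul]
      exact ENNReal.rpow_le_rpow hL1 hp1.le
    calc (2:ℝ≥0∞) ^ ((J:ℝ) * (p-1)) = (2:ℝ≥0∞) ^ (2 * (p-1)) * (2:ℝ≥0∞) ^ (((L:ℝ) - 1) * (p-1)) := by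
          rw [← two_rpow_add]; congr 1; rw [hJ]; push_cast; ring
      _ ≤ (2:ℝ≥0∞) ^ (2 * (p-1)) * b ^ (p-1) := by
          apply mul_le_mul_right
          refine le_trans ?_ this
          rw [two_rpow_le_iff]
          nlinarith
  calc _ ≤ _ := step1
    _ = _ := step2
    _ ≤ ((2:ℝ≥0∞) ^ (2 * (p-1)) * b ^ (p-1)) * (1 - (2:ℝ≥0∞) ^ (-(p-1)))⁻¹ :=
        mul_le_mul_left step3 _
    _ = _ := by ring

end Carl

namespace Carl

variable {n : ℕ}


lemma mul_meas_le_setLIntegral {ω : Measure (Fin n → ℝ)} {g : (Fin n → ℝ) → ℝ≥0∞}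
    {μ : ℝ≥0∞} {k : ℤ} {m : Fin n → ℤ} (h : μ < cubeAvg n ω g k m) :
    μ * ω (dyadicCube n k m) ≤ ∫⁻ x in dyadicCube n k m, g x ∂ω := by
  rw [cubeAvg] at h
  set a := ∫⁻ x in dyadicCube n k m, g x ∂ω
  set b := ω (dyadicCube n k m)
  rcases eq_or_ne b 0 with hb | hb
  · rw [hb, mul_zero]; exact zero_le
  rcases eq_or_ne b ∞ with hbt | hbt
  · rw [hbt, ENNReal.div_top] at h
    exact absurd h (by simp)
  · exact (ENNReal.le_div_iff_mul_le (Or.inl hb) (Or.inl hbt)).mp h.le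

/-- The master covering lemma: for a finite subfamily of the Carleson family on which
all `g`-averages exceed `μ`, the total measure is controlled. -/
lemma master (hn : 0 < n) (ω : Measure (Fin n → ℝ)) (S : Set (CubeIdx n))
    (hS : ∀ G ∈ S, (∑' G' : {G' : CubeIdx n // G' ∈ S ∧ idxCube n G' ⊆ idxCube n G},
        ω (idxCube n G'.1)) ≤ 2 * ω (idxCube n G))
    (g : (Fin n → ℝ) → ℝ≥0∞) (μ : ℝ≥0∞)
    (F : Finset (CubeIdx n)) (hFS : ∀ G ∈ F, G ∈ S)
    (hFavg : ∀ G ∈ F, μ < cubeAvg n ω g G.1 G.2) :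
    μ * ∑ G ∈ F, ω (idxCube n G) ≤ 2 * ∫⁻ x, g x ∂ω := by
  -- the maximal-cube selection
  have hex : ∀ G ∈ F, ∃ M, (M ∈ F ∧ idxCube n G ⊆ idxCube n M) ∧
      ∀ G' ∈ F, idxCube n G ⊆ idxCube n G' → M.1 ≤ G'.1 := by
    intro G hG
    have hne : (F.filter (fun G' => idxCube n G ⊆ idxCube n G')).Nonempty :=
      ⟨G, Finset.mem_filter.mpr ⟨hG, subset_refl _⟩⟩
    obtain ⟨M, hM, hmin⟩ := Finset.exists_min_image _ (fun G' => G'.1) hne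
    rw [Finset.mem_filter] at hM
    exact ⟨M, hM, fun G' hG' hsub => hmin G' (Finset.mem_filter.mpr ⟨hG', hsub⟩)⟩
  choose! r hr hrmin using hex
  have hrF : ∀ G ∈ F, r G ∈ F := fun G hG => (hr G hG).1
  have hrsub : ∀ G ∈ F, idxCube n G ⊆ idxCube n (r G) := fun G hG => (hr G hG).2
  -- key: images under r are equal or disjoint
  have key : ∀ G₁ ∈ F, ∀ G₂ ∈ F, idxCube n (r G₂) ⊆ idxCube n (r G₁) → r G₁ = r G₂ := by
    intro G₁ h1 G₂ h2 hsub
    have hs1 : idxCube n G₂ ⊆ idxCube n (r G₁) := (hrsub G₂ h2).trans hsub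
    have hmin := hrmin G₂ h2 (r G₁) (hrF G₁ h1) hs1
    have hscale : (r G₁).1 ≤ (r G₂).1 := scale_le_of_subset hn hsub
    exact (idx_eq_of_subset_same_scale hsub (le_antisymm hmin hscale)).symm
  have hdisj : ∀ G₁ ∈ F, ∀ G₂ ∈ F, r G₁ = r G₂ ∨
      Disjoint (idxCube n (r G₁)) (idxCube n (r G₂)) := by
    intro G₁ h1 G₂ h2
    rcases nested_or_disjoint (r G₁) (r G₂) with h | h | h
    · exact Or.inl ((key G₂ h2 G₁ h1 h).symm)
    · exact Or.inl (key G₁ h1 G₂ h2 h)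
    · exact Or.inr h
  set Fmax := F.image r with hFmax
  -- fiber decomposition
  have hdecomp : ∑ G ∈ F, ω (idxCube n G)
      = ∑ M ∈ Fmax, ∑ G ∈ F.filter (fun G => r G = M), ω (idxCube n G) :=
    (Finset.sum_fiberwise_of_maps_to (fun G hG => Finset.mem_image_of_mem r hG) _).symm
  -- each fiber is bounded by the Carleson sum
  have hfiber : ∀ M ∈ Fmax, ∑ G ∈ F.filter (fun G => r G = M), ω (idxCube n G)
      ≤ 2 * ω (idxCube n M) := by
    intro M hM
    obtain ⟨G₀, hG₀, rfl⟩ := Finset.mem_image.mp hM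
    refine le_trans ?_ (hS (r G₀) (hFS _ (hrF G₀ hG₀)))
    calc ∑ G ∈ F.filter (fun G => r G = r G₀), ω (idxCube n G)
        ≤ ∑ G ∈ F.filter (fun G' => G' ∈ S ∧ idxCube n G' ⊆ idxCube n (r G₀)),
            ω (idxCube n G) := by
          apply Finset.sum_le_sum_of_subset
          intro G hG
          rw [Finset.mem_filter] at hG ⊢
          exact ⟨hG.1, hFS G hG.1, hG.2 ▸ hrsub G hG.1⟩
      _ = ∑ G ∈ F.subtype (fun G' => G' ∈ S ∧ idxCube n G' ⊆ idxCube n (r G₀)),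
            ω (idxCube n G.1) := (Finset.sum_subtype_eq_sum_filter _).symm
      _ ≤ _ := ENNReal.sum_le_tsum _
  -- put it together
  calc μ * ∑ G ∈ F, ω (idxCube n G)
      ≤ μ * ∑ M ∈ Fmax, 2 * ω (idxCube n M) := by
        apply mul_le_mul_right
        rw [hdecomp]
        exact Finset.sum_le_sum hfiber
    _ = 2 * ∑ M ∈ Fmax, μ * ω (idxCube n M) := by
        simp only [Finset.mul_sum]
        exact Finset.sum_congr rfl fun M _ => by ring
    _ ≤ 2 * ∑ M ∈ Fmax, ∫⁻ x in idxCube n M, g x ∂ω := by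
        apply mul_le_mul_right
        apply Finset.sum_le_sum
        intro M hM
        obtain ⟨G₀, hG₀, rfl⟩ := Finset.mem_image.mp hM
        exact mul_meas_le_setLIntegral (hFavg _ (hrF G₀ hG₀))
    _ = 2 * ∫⁻ x in (⋃ M ∈ Fmax, idxCube n M), g x ∂ω := by
        congr 1
        rw [lintegral_biUnion_finset ?_ (fun M _ => measurableSet_dyadicCube n M.1 M.2) g]
        intro M₁ hM₁ M₂ hM₂ hne
        obtain ⟨G₁, hG₁, rfl⟩ := Finset.mem_image.mp hM₁
        obtain ⟨G₂, hG₂, rfl⟩ := Finset.mem_image.mp hM₂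
        rcases hdisj G₁ hG₁ G₂ hG₂ with h | h
        · exact absurd h hne
        · exact h
    _ ≤ 2 * ∫⁻ x, g x ∂ω := by
        apply mul_le_mul_right
        conv_rhs => rw [← Measure.restrict_univ (μ := ω)]
        exact lintegral_mono_set (Set.subset_univ _)

end Carl

namespace Carl

variable {n : ℕ}

lemma rpow_sub_one_mul {p : ℝ} (hp : 1 < p) (a : ℝ≥0∞) : a ^ (p - 1) * a = a ^ p := by
  rcases eq_or_ne a 0 with rfl | h0
  · simp [ENNReal.zero_rpow_of_pos (by linarith : (0:ℝ) < p)]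
  rcases eq_or_ne a ∞ with rfl | ht
  · rw [ENNReal.top_rpow_of_pos (by linarith : (0:ℝ) < p - 1),
      ENNReal.top_rpow_of_pos (by linarith : (0:ℝ) < p), top_mul_top]
  · have h2 : a ^ (p - 1 + 1) = a ^ (p - 1) * a ^ (1:ℝ) := ENNReal.rpow_add _ _ h0 ht
    rw [ENNReal.rpow_one] at h2
    rw [← h2]
    congr 1
    ring

/-- If the `h`-average exceeds `2^j` then the average of the truncation
`h 1_{h > 2^{j-1}}` exceeds `2^{j-1}`. -/
lemma avg_split {ω : Measure (Fin n → ℝ)} {h : (Fin n → ℝ) → ℝ≥0∞} {j : ℤ}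
    {k : ℤ} {m : Fin n → ℤ}
    (hc : (2:ℝ≥0∞) ^ ((j:ℝ)) < cubeAvg n ω h k m) :
    (2:ℝ≥0∞) ^ ((j:ℝ) - 1) <
      cubeAvg n ω (fun x => if (2:ℝ≥0∞) ^ ((j:ℝ) - 1) < h x then h x else 0) k m := by
  set c : ℝ≥0∞ := (2:ℝ≥0∞) ^ ((j:ℝ) - 1) with hcdef
  set gj : (Fin n → ℝ) → ℝ≥0∞ := fun x => if c < h x then h x else 0 with hgj
  by_contra hcon
  push_neg at hcon
  set Q := dyadicCube n k m
  have hpt : ∀ x, h x ≤ gj x + c := by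
    intro x
    by_cases hx : c < h x
    · simp only [hgj, if_pos hx]; exact le_self_add
    · push_neg at hx
      simp only [hgj, if_neg (not_lt.mpr hx)]
      simpa using hx
  have hint : ∫⁻ x in Q, h x ∂ω ≤ (∫⁻ x in Q, gj x ∂ω) + c * ω Q := by
    calc ∫⁻ x in Q, h x ∂ω ≤ ∫⁻ x in Q, (gj x + c) ∂ω := lintegral_mono hpt
      _ = (∫⁻ x in Q, gj x ∂ω) + ∫⁻ _ in Q, c ∂ω := lintegral_add_right _ measurable_const
      _ = (∫⁻ x in Q, gj x ∂ω) + c * ω Q := by rw [setLIntegral_const]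
  have havg : cubeAvg n ω h k m ≤ (2:ℝ≥0∞) ^ ((j:ℝ)) := by
    calc cubeAvg n ω h k m = (∫⁻ x in Q, h x ∂ω) / ω Q := rfl
      _ ≤ ((∫⁻ x in Q, gj x ∂ω) + c * ω Q) / ω Q := ENNReal.div_le_div_right hint _
      _ = (∫⁻ x in Q, gj x ∂ω) / ω Q + (c * ω Q) / ω Q := ENNReal.add_div
      _ ≤ c + c := by
          apply add_le_add
          · exact hcon
          · rw [div_eq_mul_inv, mul_assoc, ← div_eq_mul_inv]
            calc c * (ω Q / ω Q) ≤ c * 1 := mul_le_mul_right ENNReal.div_self_le_one _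
              _ = c := mul_one c
      _ = (2:ℝ≥0∞) ^ ((j:ℝ)) := by
          rw [hcdef, ← two_mul]
          have h2 : (2:ℝ≥0∞) * 2 ^ ((j:ℝ) - 1) = 2 ^ (1 + ((j:ℝ) - 1)) := by
            rw [two_rpow_add, ENNReal.rpow_one]
          rw [h2]
          congr 1
          ring
  exact absurd hc (not_lt.mpr havg)

end Carl

/-- The Carleson embedding for a 2-Carleson family `𝒢 ⊆ 𝒟`:
`∑_{G ∈ 𝒢} (⟨h⟩_G^ω)^p ω(G) ≤ C_p ∫ h^p dω` with `C_p` depending only on `p`. -/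
theorem statement7 :
    ∀ p : ℝ, 1 < p → ∃ C : ℝ≥0∞, C < ∞ ∧
    ∀ (n : ℕ), 0 < n → ∀ ω : Measure (Fin n → ℝ), IsLocallyFiniteMeasure ω →
    ∀ S : Set (CubeIdx n),
    (∀ G ∈ S, (∑' G' : {G' : CubeIdx n // G' ∈ S ∧ idxCube n G' ⊆ idxCube n G},
        ω (idxCube n G'.1)) ≤ 2 * ω (idxCube n G)) →
    ∀ h : (Fin n → ℝ) → ℝ≥0∞, Measurable h →
      (∑' G : S, (cubeAvg n ω h G.1.1 G.1.2) ^ p * ω (idxCube n G.1))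
        ≤ C * ∫⁻ x, (h x) ^ p ∂ω := by
  intro p hp
  have hp0 : (0:ℝ) < p := by linarith
  have hp1 : (0:ℝ) < p - 1 := by linarith
  set K : ℝ≥0∞ := (1 - (2:ℝ≥0∞) ^ (-(p-1)))⁻¹ with hK
  have hKtop : K ≠ ∞ := by
    rw [hK, ENNReal.inv_ne_top]
    have h1 : (2:ℝ≥0∞) ^ (-(p-1)) < 1 := by
      rw [show (1:ℝ≥0∞) = 2 ^ (0:ℝ) from (by simp : ((2:ℝ≥0∞)) ^ (0:ℝ) = 1).symm]
      exact Carl.two_rpow_lt_iff.mpr (by linarith)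
    exact (tsub_pos_of_lt h1).ne'
  refine ⟨(2:ℝ≥0∞)^(p+2) * ((2:ℝ≥0∞)^(2*(p-1)) * K), ?_, ?_⟩
  · exact ENNReal.mul_lt_top (Carl.two_rpow_ne_top _).lt_top
      (ENNReal.mul_lt_top (Carl.two_rpow_ne_top _).lt_top hKtop.lt_top)
  intro n hn ω _hloc S hS h hmeas
  classical
  set avg : CubeIdx n → ℝ≥0∞ := fun G => cubeAvg n ω h G.1 G.2 with havg
  set g : ℤ → (Fin n → ℝ) → ℝ≥0∞ :=
    fun j x => if (2:ℝ≥0∞) ^ ((j:ℝ) - 1) < h x then h x else 0 with hg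
  have hgmeas : ∀ j, Measurable (g j) := by
    intro j
    exact Measurable.ite (measurableSet_lt measurable_const hmeas) hmeas measurable_const
  set Fj : ℤ → ℝ≥0∞ := fun j =>
    ∑' G : CubeIdx n, (if G ∈ S ∧ (2:ℝ≥0∞) ^ ((j:ℝ)) < avg G
        then ω (idxCube n G) else 0) with hFj
  -- Step 1: rewrite as indicator sum over the full index type
  have step1 : (∑' G : S, (cubeAvg n ω h G.1.1 G.1.2) ^ p * ω (idxCube n G.1))
      = ∑' G : CubeIdx n, (if G ∈ S then (avg G)^p * ω (idxCube n G) else 0) := by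
    rw [tsum_subtype S (fun G => (avg G)^p * ω (idxCube n G))]
    exact tsum_congr fun G => by rw [Set.indicator_apply]
  -- Step 2: dyadic decomposition of the power
  have hterm : ∀ G : CubeIdx n, (if G ∈ S then (avg G)^p * ω (idxCube n G) else 0)
      ≤ (2:ℝ≥0∞)^p * ∑' j : ℤ, (if G ∈ S ∧ (2:ℝ≥0∞) ^ ((j:ℝ)) < avg G
          then (2:ℝ≥0∞) ^ ((j:ℝ) * p) * ω (idxCube n G) else 0) := by
    intro G
    by_cases hGS : G ∈ S
    · rw [if_pos hGS]
      calc (avg G)^p * ω (idxCube n G)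
          ≤ ((2:ℝ≥0∞)^p * ∑' j : ℤ, (if (2:ℝ≥0∞) ^ ((j:ℝ)) < avg G
              then (2:ℝ≥0∞) ^ ((j:ℝ) * p) else 0)) * ω (idxCube n G) :=
            mul_le_mul_left (Carl.pow_le_dyadic hp0 (avg G)) _
        _ = (2:ℝ≥0∞)^p * ∑' j : ℤ, (if G ∈ S ∧ (2:ℝ≥0∞) ^ ((j:ℝ)) < avg G
              then (2:ℝ≥0∞) ^ ((j:ℝ) * p) * ω (idxCube n G) else 0) := by
            rw [mul_assoc, ← ENNReal.tsum_mul_right]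
            congr 1
            exact tsum_congr fun j => by
              by_cases hc : (2:ℝ≥0∞) ^ ((j:ℝ)) < avg G <;> simp [hc, hGS]
    · simp [hGS]
  have step2 : (∑' G : CubeIdx n, (if G ∈ S then (avg G)^p * ω (idxCube n G) else 0))
      ≤ (2:ℝ≥0∞)^p * ∑' j : ℤ, (2:ℝ≥0∞) ^ ((j:ℝ) * p) * Fj j := by
    calc (∑' G : CubeIdx n, (if G ∈ S then (avg G)^p * ω (idxCube n G) else 0))
        ≤ ∑' G : CubeIdx n, (2:ℝ≥0∞)^p * ∑' j : ℤ,
            (if G ∈ S ∧ (2:ℝ≥0∞) ^ ((j:ℝ)) < avg G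
              then (2:ℝ≥0∞) ^ ((j:ℝ) * p) * ω (idxCube n G) else 0) :=
          ENNReal.tsum_le_tsum hterm
      _ = (2:ℝ≥0∞)^p * ∑' G : CubeIdx n, ∑' j : ℤ,
            (if G ∈ S ∧ (2:ℝ≥0∞) ^ ((j:ℝ)) < avg G
              then (2:ℝ≥0∞) ^ ((j:ℝ) * p) * ω (idxCube n G) else 0) :=
          ENNReal.tsum_mul_left
      _ = (2:ℝ≥0∞)^p * ∑' j : ℤ, ∑' G : CubeIdx n,
            (if G ∈ S ∧ (2:ℝ≥0∞) ^ ((j:ℝ)) < avg G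
              then (2:ℝ≥0∞) ^ ((j:ℝ) * p) * ω (idxCube n G) else 0) := by
          rw [ENNReal.tsum_comm]
      _ = (2:ℝ≥0∞)^p * ∑' j : ℤ, (2:ℝ≥0∞) ^ ((j:ℝ) * p) * Fj j := by
          congr 1
          refine tsum_congr fun j => ?_
          simp only [hFj]
          rw [← ENNReal.tsum_mul_left]
          exact tsum_congr fun G => by
            by_cases hc : G ∈ S ∧ (2:ℝ≥0∞) ^ ((j:ℝ)) < avg G <;> simp [hc]
  -- Step 3: the master estimate for each level j
  have hmaster : ∀ j : ℤ, (2:ℝ≥0∞) ^ ((j:ℝ) - 1) * Fj j ≤ 2 * ∫⁻ x, g j x ∂ω := by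
    intro j
    simp only [hFj]
    rw [ENNReal.tsum_eq_iSup_sum, ENNReal.mul_iSup]
    apply iSup_le
    intro s
    rw [← Finset.sum_filter]
    apply Carl.master hn ω S hS (g j)
    · intro G hG
      exact (Finset.mem_filter.mp hG).2.1
    · intro G hG
      exact Carl.avg_split (Finset.mem_filter.mp hG).2.2
  have hFj_bound : ∀ j : ℤ, Fj j ≤ (2:ℝ≥0∞) ^ (-((j:ℝ) - 1)) * (2 * ∫⁻ x, g j x ∂ω) := by
    intro j
    have h0 := Carl.two_rpow_ne_zero ((j:ℝ) - 1)
    have htop := Carl.two_rpow_ne_top ((j:ℝ) - 1)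
    calc Fj j = ((2:ℝ≥0∞) ^ ((j:ℝ) - 1))⁻¹ * ((2:ℝ≥0∞) ^ ((j:ℝ) - 1) * Fj j) := by
          rw [← mul_assoc, ENNReal.inv_mul_cancel h0 htop, one_mul]
      _ ≤ ((2:ℝ≥0∞) ^ ((j:ℝ) - 1))⁻¹ * (2 * ∫⁻ x, g j x ∂ω) :=
          mul_le_mul_right (hmaster j) _
      _ = (2:ℝ≥0∞) ^ (-((j:ℝ) - 1)) * (2 * ∫⁻ x, g j x ∂ω) := by
          rw [ENNReal.rpow_neg]
  -- Step 4: collect powers of two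
  have hco : ∀ j : ℤ, (2:ℝ≥0∞) ^ ((j:ℝ) * p) * ((2:ℝ≥0∞) ^ (-((j:ℝ) - 1)) * (2 * ∫⁻ x, g j x ∂ω))
      = (2:ℝ≥0∞) ^ (2:ℝ) * ((2:ℝ≥0∞) ^ ((j:ℝ) * (p - 1)) * ∫⁻ x, g j x ∂ω) := by
    intro j
    rw [show (2:ℝ≥0∞) * ∫⁻ x, g j x ∂ω = 2 ^ (1:ℝ) * ∫⁻ x, g j x ∂ω by rw [ENNReal.rpow_one],
      ← mul_assoc, ← mul_assoc, ← Carl.two_rpow_add, ← Carl.two_rpow_add, ← mul_assoc,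
      ← Carl.two_rpow_add]
    congr 2
    ring
  have step4 : (2:ℝ≥0∞)^p * ∑' j : ℤ, (2:ℝ≥0∞) ^ ((j:ℝ) * p) * Fj j
      ≤ (2:ℝ≥0∞)^p * ((2:ℝ≥0∞) ^ (2:ℝ) *
          ∑' j : ℤ, (2:ℝ≥0∞) ^ ((j:ℝ) * (p - 1)) * ∫⁻ x, g j x ∂ω) := by
    apply mul_le_mul_right
    rw [← ENNReal.tsum_mul_left]
    apply ENNReal.tsum_le_tsum
    intro j
    calc (2:ℝ≥0∞) ^ ((j:ℝ) * p) * Fj j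
        ≤ (2:ℝ≥0∞) ^ ((j:ℝ) * p) * ((2:ℝ≥0∞) ^ (-((j:ℝ) - 1)) * (2 * ∫⁻ x, g j x ∂ω)) :=
          mul_le_mul_right (hFj_bound j) _
      _ = (2:ℝ≥0∞) ^ (2:ℝ) * ((2:ℝ≥0∞) ^ ((j:ℝ) * (p - 1)) * ∫⁻ x, g j x ∂ω) := hco j
  -- Step 5: exchange sum and integral
  have step5 : (∑' j : ℤ, (2:ℝ≥0∞) ^ ((j:ℝ) * (p - 1)) * ∫⁻ x, g j x ∂ω)
      = ∫⁻ x, ∑' j : ℤ, (2:ℝ≥0∞) ^ ((j:ℝ) * (p - 1)) * g j x ∂ω := by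
    rw [lintegral_tsum fun j => ((hgmeas j).const_mul _).aemeasurable]
    exact tsum_congr fun j => (lintegral_const_mul _ (hgmeas j)).symm
  -- Step 6: pointwise geometric-sum bound
  have step6 : ∀ x, (∑' j : ℤ, (2:ℝ≥0∞) ^ ((j:ℝ) * (p - 1)) * g j x)
      ≤ ((2:ℝ≥0∞) ^ (2 * (p-1)) * K) * (h x) ^ p := by
    intro x
    calc (∑' j : ℤ, (2:ℝ≥0∞) ^ ((j:ℝ) * (p - 1)) * g j x)
        = (∑' j : ℤ, (if (2:ℝ≥0∞) ^ ((j:ℝ) - 1) < h x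
            then (2:ℝ≥0∞) ^ ((j:ℝ) * (p - 1)) else 0)) * h x := by
          rw [← ENNReal.tsum_mul_right]
          exact tsum_congr fun j => by
            by_cases hc : (2:ℝ≥0∞) ^ ((j:ℝ) - 1) < h x <;> simp [hg, hc]
      _ ≤ ((2:ℝ≥0∞) ^ (2 * (p-1)) * K * (h x) ^ (p - 1)) * h x :=
          mul_le_mul_left (Carl.dyadic_tail hp (h x)) _
      _ = ((2:ℝ≥0∞) ^ (2 * (p-1)) * K) * (h x) ^ p := by
          rw [mul_assoc, Carl.rpow_sub_one_mul hp]
  -- put everything together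
  rw [step1]
  calc (∑' G : CubeIdx n, (if G ∈ S then (avg G)^p * ω (idxCube n G) else 0))
      ≤ (2:ℝ≥0∞)^p * ∑' j : ℤ, (2:ℝ≥0∞) ^ ((j:ℝ) * p) * Fj j := step2
    _ ≤ (2:ℝ≥0∞)^p * ((2:ℝ≥0∞) ^ (2:ℝ) *
          ∑' j : ℤ, (2:ℝ≥0∞) ^ ((j:ℝ) * (p - 1)) * ∫⁻ x, g j x ∂ω) := step4
    _ = (2:ℝ≥0∞)^(p+2) * ∫⁻ x, ∑' j : ℤ, (2:ℝ≥0∞) ^ ((j:ℝ) * (p - 1)) * g j x ∂ω := by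
        rw [step5, ← mul_assoc, ← Carl.two_rpow_add]
    _ ≤ (2:ℝ≥0∞)^(p+2) * (((2:ℝ≥0∞) ^ (2 * (p-1)) * K) * ∫⁻ x, (h x) ^ p ∂ω) := by
        apply mul_le_mul_right
        calc (∫⁻ x, ∑' j : ℤ, (2:ℝ≥0∞) ^ ((j:ℝ) * (p - 1)) * g j x ∂ω)
            ≤ ∫⁻ x, ((2:ℝ≥0∞) ^ (2 * (p-1)) * K) * (h x) ^ p ∂ω := lintegral_mono step6
          _ = ((2:ℝ≥0∞) ^ (2 * (p-1)) * K) * ∫⁻ x, (h x) ^ p ∂ω :=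
              lintegral_const_mul' _ _
                (ENNReal.mul_ne_top (Carl.two_rpow_ne_top _) hKtop)
    _ = (2:ℝ≥0∞)^(p+2) * ((2:ℝ≥0∞)^(2*(p-1)) * K) * ∫⁻ x, (h x) ^ p ∂ω := by
        ring

end
end

section
/- Let p ∈ [2,∞) with conjugate p' = p/(p-1), and let A, B > 0. Let F ∈ 𝒟 and let {F_i}_{i ∈ I} be a countable collection of pairwise disjoint dyadic cubes contained in F such that ∑_{i ∈ I} ∬_{F̂_i} φ_F μ dη dσ ≤ A^{-1} ∬_{F̂} φ_F μ dη dσ. Then ∑_{i ∈ I} ‖φ_{F_i}‖_{L^p(σ;ℓ²)}^p ≤ (B^{-p'} + B^{2-p'} A^{-1}) ‖φ_F‖_{L^p(σ;ℓ²)}^p. In particular, for B = 4^{1/p'} and A = 4 B^{2-p'} = 4^{2/p'}, one has ∑_{i ∈ I} ‖φ_{F_i}‖_{L^p(σ;ℓ²)}^p ≤ (1/2) ‖φ_F‖_{L^p(σ;ℓ²)}^p. -/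
open MeasureTheory ENNReal Set
open scoped Classical NNReal ENNReal

noncomputable section

section Aux

variable {n : ℕ} {σ : Measure (Fin n → ℝ)} {μ f g : (Fin n → ℝ) × ℝ → ℝ≥0∞}
  {k : ℤ} {m : Fin n → ℤ}

lemma aux_rpow_le_rpow_nonpos {x y : ℝ≥0∞} {z : ℝ} (h : x ≤ y) (hz : z ≤ 0) :
    y ^ z ≤ x ^ z := by
  rw [← neg_neg z, ENNReal.rpow_neg y, ENNReal.rpow_neg x]
  exact ENNReal.inv_le_inv.2 (ENNReal.rpow_le_rpow h (neg_nonneg.2 hz))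

lemma aux_meas_cube : MeasurableSet (dyadicCube n k m) := by
  have : dyadicCube n k m =
      Set.pi Set.univ (fun i => Set.Ico ((2:ℝ) ^ (-k) * (m i : ℝ))
        ((2:ℝ) ^ (-k) * ((m i : ℝ) + 1))) := by
    ext x; simp [dyadicCube, Set.mem_pi]
  rw [this]
  exact MeasurableSet.univ_pi fun i => measurableSet_Ico

lemma aux_meas_box : MeasurableSet (carlesonBox n k m) :=
  aux_meas_cube.prod measurableSet_Ioc

lemma aux_meas_boxFn (hμ : Measurable μ) : Measurable (boxFn n μ k m) :=
  hμ.indicator aux_meas_box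

lemma aux_meas_vertL2 (hf : Measurable f) : Measurable (vertL2 n f) := by
  apply (ENNReal.continuous_rpow_const.measurable).comp
  exact Measurable.ennreal_tsum fun j =>
    ((hf.comp (measurable_id.prodMk measurable_const)).pow_const 2)

lemma aux_meas_testFn (hμ : Measurable μ) (q : ℝ) :
    Measurable (testFn n q μ k m) := by
  unfold testFn
  have hG : Measurable fun z : (Fin n → ℝ) × ℝ => vertL2 n (boxFn n μ k m) z.1 :=
    (aux_meas_vertL2 (aux_meas_boxFn hμ)).comp measurable_fst
  exact Measurable.ite (hG (measurableSet_singleton 0)) measurable_const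
    ((ENNReal.continuous_rpow_const.measurable.comp hG).mul (aux_meas_boxFn hμ))

lemma aux_boxFn_le {k' : ℤ} {m' : Fin n → ℤ}
    (h : carlesonBox n k m ⊆ carlesonBox n k' m') (z : (Fin n → ℝ) × ℝ) :
    boxFn n μ k m z ≤ boxFn n μ k' m' z :=
  Set.indicator_le_indicator_of_subset h (fun _ => zero_le) z

lemma aux_vertL2_mono (h : ∀ z, f z ≤ g z) (x : Fin n → ℝ) :
    vertL2 n f x ≤ vertL2 n g x := by
  refine ENNReal.rpow_le_rpow (ENNReal.tsum_le_tsum fun j => ?_) (by norm_num)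
  exact pow_le_pow_left' (h _) 2

lemma aux_vertL2_zero {x : Fin n → ℝ} (hx : x ∉ dyadicCube n k m) :
    vertL2 n (boxFn n μ k m) x = 0 := by
  have h0 : ∀ j : ℤ, boxFn n μ k m (x, (2:ℝ) ^ (-j)) = 0 := fun j => by
    apply Set.indicator_of_notMem
    exact fun hz => hx hz.1
  rw [vertL2]
  have hz : ∀ j : ℤ, (boxFn n μ k m (x, (2:ℝ) ^ (-j))) ^ 2 = 0 := fun j => by
    rw [h0 j]; exact zero_pow two_ne_zero
  rw [tsum_congr hz, tsum_zero, ENNReal.zero_rpow_of_pos (by norm_num)]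

lemma aux_vertL2_sq (f : (Fin n → ℝ) × ℝ → ℝ≥0∞) (x : Fin n → ℝ) :
    (vertL2 n f x) ^ (2:ℕ) = ∑' j : ℤ, (f (x, (2:ℝ) ^ (-j))) ^ 2 := by
  rw [vertL2, ← ENNReal.rpow_natCast _ 2, ← ENNReal.rpow_mul]
  norm_num

lemma aux_side_le (hn : 0 < n) {Q R : CubeIdx n} (h : idxCube n Q ⊆ idxCube n R) :
    (2:ℝ) ^ (-Q.1) ≤ (2:ℝ) ^ (-R.1) := by
  have h2 : ∀ k : ℤ, (0:ℝ) < (2:ℝ) ^ (-k) := fun k => zpow_pos (by norm_num) _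
  set i0 : Fin n := ⟨0, hn⟩
  have hmem : ∀ t ∈ Set.Ico ((2:ℝ)^(-Q.1) * (Q.2 i0 : ℝ))
      ((2:ℝ)^(-Q.1) * ((Q.2 i0 : ℝ) + 1)),
      (Function.update (fun i => (2:ℝ)^(-Q.1) * (Q.2 i : ℝ)) i0 t) ∈ idxCube n Q := by
    intro t ht i
    rcases eq_or_ne i i0 with rfl | hi
    · rw [Function.update_self]; exact ht
    · rw [Function.update_of_ne hi]
      exact ⟨le_refl _, mul_lt_mul_of_pos_left (by linarith) (h2 _)⟩
  have hsub : Set.Ico ((2:ℝ)^(-Q.1) * (Q.2 i0 : ℝ)) ((2:ℝ)^(-Q.1) * ((Q.2 i0 : ℝ) + 1)) ⊆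
      Set.Ico ((2:ℝ)^(-R.1) * (R.2 i0 : ℝ)) ((2:ℝ)^(-R.1) * ((R.2 i0 : ℝ) + 1)) := by
    intro t ht
    have h3 : ∀ i, (Function.update (fun i => (2:ℝ)^(-Q.1) * (Q.2 i : ℝ)) i0 t) i
        ∈ Set.Ico ((2:ℝ)^(-R.1) * (R.2 i : ℝ)) ((2:ℝ)^(-R.1) * ((R.2 i : ℝ) + 1)) :=
      h (hmem t ht)
    have h4 := h3 i0
    rwa [Function.update_self] at h4
  have hlt : (2:ℝ)^(-Q.1) * (Q.2 i0 : ℝ) < (2:ℝ)^(-Q.1) * ((Q.2 i0 : ℝ) + 1) :=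
    mul_lt_mul_of_pos_left (by linarith) (h2 _)
  rw [Set.Ico_subset_Ico_iff hlt] at hsub
  obtain ⟨h1, h2'⟩ := hsub
  nlinarith [h1, h2']

lemma aux_box_subset (hn : 0 < n) {Q R : CubeIdx n} (h : idxCube n Q ⊆ idxCube n R) :
    carlesonBox n Q.1 Q.2 ⊆ carlesonBox n R.1 R.2 :=
  Set.prod_mono h (Set.Ioc_subset_Ioc_right (aux_side_le hn h))

/-- Pointwise value of `|φ_Q|_{ℓ²}`. -/
lemma aux_vertL2_testFn {q : ℝ} (hq1 : 1 < q) (x : Fin n → ℝ)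
    (hfin : vertL2 n (boxFn n μ k m) x ≠ ∞) :
    vertL2 n (testFn n q μ k m) x = (vertL2 n (boxFn n μ k m) x) ^ (q - 1) := by
  set G : ℝ≥0∞ := vertL2 n (boxFn n μ k m) x with hGdef
  by_cases hG : G = 0
  · have h0 : ∀ j : ℤ, testFn n q μ k m (x, (2:ℝ) ^ (-j)) = 0 := fun j => by
      simp [testFn, ← hGdef, hG]
    rw [hG, ENNReal.zero_rpow_of_pos (by linarith : (0:ℝ) < q - 1), vertL2]
    have hz : ∀ j : ℤ, (testFn n q μ k m (x, (2:ℝ) ^ (-j))) ^ 2 = 0 := fun j => by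
      rw [h0 j]; exact zero_pow two_ne_zero
    rw [tsum_congr hz, tsum_zero, ENNReal.zero_rpow_of_pos (by norm_num)]
  · have hterm : ∀ j : ℤ, testFn n q μ k m (x, (2:ℝ) ^ (-j))
        = G ^ (q - 2) * boxFn n μ k m (x, (2:ℝ) ^ (-j)) := fun j => by
      simp [testFn, ← hGdef, hG]
    have hGsq : (∑' j : ℤ, (boxFn n μ k m (x, (2:ℝ) ^ (-j))) ^ 2) = G ^ (2:ℕ) :=
      (aux_vertL2_sq _ x).symm
    rw [vertL2]
    simp only [hterm, mul_pow]
    rw [ENNReal.tsum_mul_left, hGsq]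
    rw [← ENNReal.rpow_natCast (G ^ (q-2)) 2, ← ENNReal.rpow_natCast G 2,
      ENNReal.mul_rpow_of_nonneg _ _ (by norm_num : (0:ℝ) ≤ 1/2),
      ← ENNReal.rpow_mul, ← ENNReal.rpow_mul, ← ENNReal.rpow_mul,
      ← ENNReal.rpow_add _ _ hG hfin]
    congr 1
    push_cast
    ring

/-- `G < ∞` a.e. -/
lemma aux_ae_fin (hμ : Measurable μ) {q : ℝ} (hq : 0 < q)
    (hfin : mixedNorm n σ q (boxFn n μ k m) < ∞) :
    ∀ᵐ x ∂σ, vertL2 n (boxFn n μ k m) x < ∞ := by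
  have hint : (∫⁻ x, (vertL2 n (boxFn n μ k m) x) ^ q ∂σ) ≠ ∞ := by
    intro hcon
    rw [mixedNorm, hcon, ENNReal.top_rpow_of_pos (by positivity)] at hfin
    exact (lt_irrefl _ hfin)
  have := ae_lt_top (ENNReal.continuous_rpow_const.measurable.comp
    (aux_meas_vertL2 (aux_meas_boxFn hμ))) hint
  filter_upwards [this] with x hx
  by_contra hcon
  push_neg at hcon
  rw [top_le_iff] at hcon
  rw [Function.comp_apply, hcon, ENNReal.top_rpow_of_pos hq] at hx
  exact lt_irrefl _ hx

/-- `‖φ_Q‖_{L^p(σ;ℓ²)}^p = ∫ G^q`. -/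
lemma aux_mixedNorm_testFn (hμ : Measurable μ) {p q : ℝ} (hp : 2 ≤ p)
    (hq : q = p / (p - 1)) (hfin : mixedNorm n σ q (boxFn n μ k m) < ∞) :
    mixedNorm n σ p (testFn n q μ k m) ^ p
      = ∫⁻ x, (vertL2 n (boxFn n μ k m) x) ^ q ∂σ := by
  have hp1 : (1:ℝ) < p - 1 + 1 := by linarith
  have hp0 : (0:ℝ) < p := by linarith
  have hq1 : 1 < q := by
    rw [hq]; rw [lt_div_iff₀ (by linarith : (0:ℝ) < p - 1)]; linarith
  have hqp : (q - 1) * p = q := by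
    have h1 : p - 1 ≠ 0 := by linarith
    rw [hq]
    field_simp
    ring
  rw [mixedNorm, ← ENNReal.rpow_mul, one_div, inv_mul_cancel₀ (ne_of_gt hp0),
    ENNReal.rpow_one]
  refine lintegral_congr_ae ?_
  filter_upwards [aux_ae_fin hμ (by linarith : (0:ℝ) < q) hfin] with x hx
  rw [aux_vertL2_testFn hq1 x hx.ne, ← ENNReal.rpow_mul, hqp]

/-- The box integral of `φ_F` over a sub-box `Q̂ ⊆ F̂`. -/
lemma aux_boxInt_testFn (hμ : Measurable μ) (q : ℝ) {Q F : CubeIdx n}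
    (hbox : carlesonBox n Q.1 Q.2 ⊆ carlesonBox n F.1 F.2) :
    boxInt n σ μ (testFn n q μ F.1 F.2) Q.1 Q.2
      = ∫⁻ x in dyadicCube n Q.1 Q.2,
          (if vertL2 n (boxFn n μ F.1 F.2) x = 0 then 0
            else (vertL2 n (boxFn n μ F.1 F.2) x) ^ (q - 2))
            * (vertL2 n (boxFn n μ Q.1 Q.2) x) ^ (2:ℕ) ∂σ := by
  set G : (Fin n → ℝ) → ℝ≥0∞ := vertL2 n (boxFn n μ F.1 F.2) with hGdef
  have step1 : boxInt n σ μ (testFn n q μ F.1 F.2) Q.1 Q.2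
      = ∑' j : ℤ, ∫⁻ x in dyadicCube n Q.1 Q.2,
          (if (2:ℝ) ^ j ≤ (2:ℝ) ^ (-Q.1) then
            testFn n q μ F.1 F.2 (x, (2:ℝ) ^ j) * μ (x, (2:ℝ) ^ j) else 0) ∂σ := by
    rw [boxInt]
    congr 1; funext j
    by_cases hj : (2:ℝ) ^ j ≤ (2:ℝ) ^ (-Q.1)
    · simp only [if_pos hj]
    · simp only [if_neg hj, lintegral_zero]
  rw [step1, ← lintegral_tsum]
  · refine setLIntegral_congr_fun aux_meas_cube ?_
    intro x hx
    have hterm : ∀ j : ℤ,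
        (if (2:ℝ) ^ j ≤ (2:ℝ) ^ (-Q.1) then
          testFn n q μ F.1 F.2 (x, (2:ℝ) ^ j) * μ (x, (2:ℝ) ^ j) else 0)
        = (if G x = 0 then 0 else G x ^ (q - 2))
            * (boxFn n μ Q.1 Q.2 (x, (2:ℝ) ^ j)) ^ 2 := by
      intro j
      by_cases hj : (2:ℝ) ^ j ≤ (2:ℝ) ^ (-Q.1)
      · have hmemQ : (x, (2:ℝ) ^ j) ∈ carlesonBox n Q.1 Q.2 :=
          ⟨hx, ⟨zpow_pos (by norm_num) _, hj⟩⟩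
        have hmemF : (x, (2:ℝ) ^ j) ∈ carlesonBox n F.1 F.2 := hbox hmemQ
        have hbQ : boxFn n μ Q.1 Q.2 (x, (2:ℝ) ^ j) = μ (x, (2:ℝ) ^ j) :=
          Set.indicator_of_mem hmemQ _
        have hbF : boxFn n μ F.1 F.2 (x, (2:ℝ) ^ j) = μ (x, (2:ℝ) ^ j) :=
          Set.indicator_of_mem hmemF _
        rw [if_pos hj, testFn]
        by_cases hG : G x = 0
        · simp [← hGdef, hG]
        · simp only [← hGdef, hG, if_neg hG, if_false]
          rw [hbF, hbQ, sq]
          ring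
      · have hbQ : boxFn n μ Q.1 Q.2 (x, (2:ℝ) ^ j) = 0 := by
          apply Set.indicator_of_notMem
          intro hmem
          exact hj hmem.2.2
        rw [if_neg hj, hbQ]
        simp
    calc ∑' j : ℤ, (if (2:ℝ) ^ j ≤ (2:ℝ) ^ (-Q.1) then
            testFn n q μ F.1 F.2 (x, (2:ℝ) ^ j) * μ (x, (2:ℝ) ^ j) else 0)
        = ∑' j : ℤ, (if G x = 0 then 0 else G x ^ (q - 2))
            * (boxFn n μ Q.1 Q.2 (x, (2:ℝ) ^ j)) ^ 2 := by
          exact tsum_congr hterm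
      _ = (if G x = 0 then 0 else G x ^ (q - 2))
            * ∑' j : ℤ, (boxFn n μ Q.1 Q.2 (x, (2:ℝ) ^ j)) ^ 2 := ENNReal.tsum_mul_left
      _ = (if G x = 0 then 0 else G x ^ (q - 2))
            * (vertL2 n (boxFn n μ Q.1 Q.2) x) ^ (2:ℕ) := by
          congr 1
          rw [aux_vertL2_sq]
          exact ((Equiv.neg ℤ).tsum_eq
            (fun j => (boxFn n μ Q.1 Q.2 (x, (2:ℝ) ^ j)) ^ 2)).symm
  · intro j
    by_cases hj : (2:ℝ) ^ j ≤ (2:ℝ) ^ (-Q.1)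
    · simp only [hj, if_true]
      exact (((aux_meas_testFn hμ q).comp
        (measurable_id.prodMk measurable_const)).mul
        (hμ.comp (measurable_id.prodMk measurable_const))).aemeasurable
    · simp only [hj, if_false]
      exact aemeasurable_const

end Aux


/-- The key estimate (3.2)/(sparseness) for the test functions: if pairwise disjoint dyadic
cubes `F_i ⊆ F` satisfy `∑_i ∬_{F̂_i} φ_F μ ≤ A⁻¹ ∬_{F̂} φ_F μ`, then
`∑_i ‖φ_{F_i}‖_{L^p(σ;ℓ²)}^p ≤ (B^{-p'} + B^{2-p'} A⁻¹) ‖φ_F‖_{L^p(σ;ℓ²)}^p` for all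
`A, B > 0`; in particular, for `B = 4^{1/p'}` and `A = 4^{2/p'}` the factor is `1/2`. -/
theorem statement8 (p : ℝ) (hp : 2 ≤ p) (n : ℕ) (hn : 0 < n)
    (σ : Measure (Fin n → ℝ)) [IsLocallyFiniteMeasure σ]
    (μ : (Fin n → ℝ) × ℝ → ℝ≥0∞) (hμ : Measurable μ)
    (hfin : ∀ Q : CubeIdx n, mixedNorm n σ (p/(p-1)) (boxFn n μ Q.1 Q.2) < ∞)
    (F : CubeIdx n) (I : Type) [Countable I] (Fi : I → CubeIdx n)
    (hsub : ∀ i, idxCube n (Fi i) ⊆ idxCube n F)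
    (hdisj : Pairwise fun i j => Disjoint (idxCube n (Fi i)) (idxCube n (Fi j))) :
    (∀ A B : ℝ≥0, 0 < A → 0 < B →
      (∑' i : I, boxInt n σ μ (testFn n (p/(p-1)) μ F.1 F.2) (Fi i).1 (Fi i).2
          ≤ (A : ℝ≥0∞)⁻¹ * boxInt n σ μ (testFn n (p/(p-1)) μ F.1 F.2) F.1 F.2) →
      (∑' i : I, mixedNorm n σ p (testFn n (p/(p-1)) μ (Fi i).1 (Fi i).2) ^ p)
        ≤ ((B : ℝ≥0∞) ^ (-(p/(p-1))) + (B : ℝ≥0∞) ^ (2 - p/(p-1)) * (A : ℝ≥0∞)⁻¹)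
            * mixedNorm n σ p (testFn n (p/(p-1)) μ F.1 F.2) ^ p)
    ∧
    ((∑' i : I, boxInt n σ μ (testFn n (p/(p-1)) μ F.1 F.2) (Fi i).1 (Fi i).2
          ≤ ((4 : ℝ≥0∞) ^ (2/(p/(p-1))))⁻¹
              * boxInt n σ μ (testFn n (p/(p-1)) μ F.1 F.2) F.1 F.2) →
      (∑' i : I, mixedNorm n σ p (testFn n (p/(p-1)) μ (Fi i).1 (Fi i).2) ^ p)
        ≤ (1/2) * mixedNorm n σ p (testFn n (p/(p-1)) μ F.1 F.2) ^ p) := by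
  have hp0 : (0:ℝ) < p := by linarith
  have hp1 : (0:ℝ) < p - 1 := by linarith
  set q : ℝ := p / (p - 1) with hqdef
  have hq1 : 1 < q := by rw [hqdef, lt_div_iff₀ hp1]; linarith
  have hq2 : q ≤ 2 := by rw [hqdef, div_le_iff₀ hp1]; linarith
  have hq0 : (0:ℝ) < q := by linarith
  set G : (Fin n → ℝ) → ℝ≥0∞ := vertL2 n (boxFn n μ F.1 F.2) with hGdef
  set Gi : I → (Fin n → ℝ) → ℝ≥0∞ :=
    fun i => vertL2 n (boxFn n μ (Fi i).1 (Fi i).2) with hGidef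
  have hGmeas : Measurable G := aux_meas_vertL2 (aux_meas_boxFn hμ)
  have hGimeas : ∀ i, Measurable (Gi i) := fun i => aux_meas_vertL2 (aux_meas_boxFn hμ)
  have hboxsub : ∀ i, carlesonBox n (Fi i).1 (Fi i).2 ⊆ carlesonBox n F.1 F.2 :=
    fun i => aux_box_subset hn (hsub i)
  have hGiG : ∀ i x, Gi i x ≤ G x := fun i x =>
    aux_vertL2_mono (aux_boxFn_le (hboxsub i)) x
  have haefin : ∀ᵐ x ∂σ, G x < ∞ := aux_ae_fin hμ hq0 (hfin F)
  set c : (Fin n → ℝ) → ℝ≥0∞ := fun x => if G x = 0 then 0 else G x ^ (q - 2)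
    with hcdef
  have hcmeas : Measurable c := Measurable.ite (hGmeas (measurableSet_singleton 0))
    measurable_const (ENNReal.continuous_rpow_const.measurable.comp hGmeas)
  have hnormF : mixedNorm n σ p (testFn n q μ F.1 F.2) ^ p = ∫⁻ x, G x ^ q ∂σ :=
    aux_mixedNorm_testFn hμ hp hqdef (hfin F)
  have hnorms : ∀ i, mixedNorm n σ p (testFn n q μ (Fi i).1 (Fi i).2) ^ p
      = ∫⁻ x, Gi i x ^ q ∂σ := fun i => aux_mixedNorm_testFn hμ hp hqdef (hfin (Fi i))
  have hsupp : ∀ (k : ℤ) (m : Fin n → ℤ),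
      ∫⁻ x, (vertL2 n (boxFn n μ k m) x) ^ q ∂σ
        = ∫⁻ x in dyadicCube n k m, (vertL2 n (boxFn n μ k m) x) ^ q ∂σ := by
    intro k m
    rw [← lintegral_indicator aux_meas_cube]
    refine lintegral_congr fun x => ?_
    by_cases hx : x ∈ dyadicCube n k m
    · rw [Set.indicator_of_mem hx]
    · rw [Set.indicator_of_notMem hx, aux_vertL2_zero hx,
        ENNReal.zero_rpow_of_pos hq0]
  have hboxF : boxInt n σ μ (testFn n q μ F.1 F.2) F.1 F.2 = ∫⁻ x, G x ^ q ∂σ := by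
    rw [aux_boxInt_testFn hμ q (Q := F) (F := F) subset_rfl, hsupp F.1 F.2]
    refine lintegral_congr_ae ?_
    filter_upwards [ae_restrict_of_ae haefin] with x hx
    rw [← hGdef]
    by_cases hG0 : G x = 0
    · rw [if_pos hG0, hG0, ENNReal.zero_rpow_of_pos hq0, zero_mul]
    · rw [if_neg hG0, ← ENNReal.rpow_natCast (G x) 2,
        ← ENNReal.rpow_add _ _ hG0 hx.ne]
      congr 1
      push_cast
      ring
  -- the per-cube estimate
  have hkey : ∀ (B : ℝ≥0), 0 < B → ∀ i : I,
      (∫⁻ x in dyadicCube n (Fi i).1 (Fi i).2, Gi i x ^ q ∂σ)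
        ≤ (B:ℝ≥0∞) ^ (-q) * ∫⁻ x in dyadicCube n (Fi i).1 (Fi i).2, G x ^ q ∂σ
          + (B:ℝ≥0∞) ^ (2 - q)
              * boxInt n σ μ (testFn n q μ F.1 F.2) (Fi i).1 (Fi i).2 := by
    intro B hB i
    have hBne : (B:ℝ≥0∞) ≠ 0 := by exact_mod_cast hB.ne'
    have hBinv_fin : (B:ℝ≥0∞)⁻¹ ≠ ∞ := by simp [hBne]
    rw [aux_boxInt_testFn hμ q (Q := Fi i) (F := F) (hboxsub i)]
    calc ∫⁻ x in dyadicCube n (Fi i).1 (Fi i).2, Gi i x ^ q ∂σ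
        ≤ ∫⁻ x in dyadicCube n (Fi i).1 (Fi i).2,
            ((B:ℝ≥0∞) ^ (-q) * G x ^ q
              + (B:ℝ≥0∞) ^ (2 - q) * (c x * Gi i x ^ (2:ℕ))) ∂σ := by
          refine lintegral_mono_ae ?_
          filter_upwards [ae_restrict_of_ae haefin] with x hx
          by_cases hle : Gi i x ≤ (B:ℝ≥0∞)⁻¹ * G x
          · refine le_trans ?_ (self_le_add_right _ _)
            calc Gi i x ^ q ≤ ((B:ℝ≥0∞)⁻¹ * G x) ^ q :=
                  ENNReal.rpow_le_rpow hle hq0.le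
              _ = (B:ℝ≥0∞) ^ (-q) * G x ^ q := by
                  rw [ENNReal.mul_rpow_of_nonneg _ _ hq0.le, ENNReal.inv_rpow,
                    ← ENNReal.rpow_neg]
          · push_neg at hle
            have hGi_fin : Gi i x < ∞ := lt_of_le_of_lt (hGiG i x) hx
            have hGi0 : Gi i x ≠ 0 := by
              intro h0
              rw [h0] at hle
              exact absurd hle (by simp)
            have hG0 : G x ≠ 0 := fun h0 => hGi0 (le_antisymm (by
              have := hGiG i x
              rwa [h0] at this) zero_le)
            have hc : c x = G x ^ (q - 2) := if_neg hG0
            refine le_trans ?_ (self_le_add_left _ _)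
            calc Gi i x ^ q = Gi i x ^ (q - 2) * Gi i x ^ (2:ℕ) := by
                  rw [← ENNReal.rpow_natCast _ 2,
                    ← ENNReal.rpow_add _ _ hGi0 hGi_fin.ne]
                  congr 1
                  push_cast
                  ring
              _ ≤ ((B:ℝ≥0∞)⁻¹ * G x) ^ (q - 2) * Gi i x ^ (2:ℕ) :=
                  mul_le_mul_of_nonneg_right (aux_rpow_le_rpow_nonpos hle.le (by linarith)) zero_le
              _ = (B:ℝ≥0∞) ^ (2 - q) * (c x * Gi i x ^ (2:ℕ)) := by
                  rw [hc, ENNReal.mul_rpow_of_ne_top hBinv_fin hx.ne,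
                    ENNReal.inv_rpow, ← ENNReal.rpow_neg,
                    (by ring : -(q - 2) = 2 - q)]
                  ring
      _ = (B:ℝ≥0∞) ^ (-q) * ∫⁻ x in dyadicCube n (Fi i).1 (Fi i).2, G x ^ q ∂σ
          + (B:ℝ≥0∞) ^ (2 - q)
              * ∫⁻ x in dyadicCube n (Fi i).1 (Fi i).2, c x * Gi i x ^ (2:ℕ) ∂σ := by
          have hGq : Measurable fun x : Fin n → ℝ => G x ^ q :=
            ENNReal.continuous_rpow_const.measurable.comp hGmeas
          have hcGi : Measurable fun x : Fin n → ℝ => c x * Gi i x ^ (2:ℕ) :=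
            hcmeas.mul ((hGimeas i).pow_const 2)
          rw [lintegral_add_left (hGq.const_mul _), lintegral_const_mul _ hGq,
            lintegral_const_mul _ hcGi]
  -- the sum over i of ∫_{F_i} G^q
  have hsum_le : ∑' i : I, (∫⁻ x in dyadicCube n (Fi i).1 (Fi i).2, G x ^ q ∂σ)
      ≤ ∫⁻ x, G x ^ q ∂σ := by
    have hdisj' : Pairwise (Function.onFun Disjoint
        fun i : I => dyadicCube n (Fi i).1 (Fi i).2) := fun i j hij => hdisj hij
    rw [← lintegral_iUnion (fun i => aux_meas_cube) hdisj' fun x => G x ^ q]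
    exact setLIntegral_le_lintegral _ _
  have main : ∀ A B : ℝ≥0, 0 < A → 0 < B →
      (∑' i : I, boxInt n σ μ (testFn n q μ F.1 F.2) (Fi i).1 (Fi i).2
          ≤ (A : ℝ≥0∞)⁻¹ * boxInt n σ μ (testFn n q μ F.1 F.2) F.1 F.2) →
      (∑' i : I, mixedNorm n σ p (testFn n q μ (Fi i).1 (Fi i).2) ^ p)
        ≤ ((B : ℝ≥0∞) ^ (-q) + (B : ℝ≥0∞) ^ (2 - q) * (A : ℝ≥0∞)⁻¹)
            * mixedNorm n σ p (testFn n q μ F.1 F.2) ^ p := by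
    intro A B hA hB hyp
    calc ∑' i : I, mixedNorm n σ p (testFn n q μ (Fi i).1 (Fi i).2) ^ p
        = ∑' i : I, ∫⁻ x in dyadicCube n (Fi i).1 (Fi i).2, Gi i x ^ q ∂σ := by
          refine tsum_congr fun i => ?_
          rw [hnorms i, hsupp (Fi i).1 (Fi i).2]
      _ ≤ ∑' i : I, ((B:ℝ≥0∞) ^ (-q)
            * (∫⁻ x in dyadicCube n (Fi i).1 (Fi i).2, G x ^ q ∂σ)
            + (B:ℝ≥0∞) ^ (2 - q)
              * boxInt n σ μ (testFn n q μ F.1 F.2) (Fi i).1 (Fi i).2) :=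
          ENNReal.tsum_le_tsum (hkey B hB)
      _ = (B:ℝ≥0∞) ^ (-q)
            * ∑' i : I, (∫⁻ x in dyadicCube n (Fi i).1 (Fi i).2, G x ^ q ∂σ)
          + (B:ℝ≥0∞) ^ (2 - q)
            * ∑' i : I, boxInt n σ μ (testFn n q μ F.1 F.2) (Fi i).1 (Fi i).2 := by
          rw [ENNReal.tsum_add, ENNReal.tsum_mul_left, ENNReal.tsum_mul_left]
      _ ≤ (B:ℝ≥0∞) ^ (-q) * ∫⁻ x, G x ^ q ∂σ
          + (B:ℝ≥0∞) ^ (2 - q)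
            * ((A:ℝ≥0∞)⁻¹ * boxInt n σ μ (testFn n q μ F.1 F.2) F.1 F.2) :=
          add_le_add (mul_le_mul_of_nonneg_left hsum_le zero_le) (mul_le_mul_of_nonneg_left hyp zero_le)
      _ = ((B : ℝ≥0∞) ^ (-q) + (B : ℝ≥0∞) ^ (2 - q) * (A : ℝ≥0∞)⁻¹)
            * mixedNorm n σ p (testFn n q μ F.1 F.2) ^ p := by
          rw [hboxF, hnormF]
          ring
  refine ⟨main, ?_⟩
  intro hyp
  have hqne : q ≠ 0 := hq0.ne'
  set B₀ : ℝ≥0 := (4:ℝ≥0) ^ ((1:ℝ)/q) with hB₀def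
  set A₀ : ℝ≥0 := (4:ℝ≥0) ^ ((2:ℝ)/q) with hA₀def
  have h4 : (0:ℝ≥0) < 4 := by norm_num
  have hB₀ : 0 < B₀ := NNReal.rpow_pos h4
  have hA₀ : 0 < A₀ := NNReal.rpow_pos h4
  have hcoeA : (A₀ : ℝ≥0∞) = (4:ℝ≥0∞) ^ ((2:ℝ)/q) := by
    rw [hA₀def, ENNReal.coe_rpow_of_ne_zero (by norm_num)]
    norm_num
  have hcoeB : (B₀ : ℝ≥0∞) = (4:ℝ≥0∞) ^ ((1:ℝ)/q) := by
    rw [hB₀def, ENNReal.coe_rpow_of_ne_zero (by norm_num)]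
    norm_num
  have hmain := main A₀ B₀ hA₀ hB₀ (by rw [hcoeA]; exact hyp)
  have hcoeff : (B₀:ℝ≥0∞) ^ (-q) + (B₀:ℝ≥0∞) ^ (2 - q) * (A₀:ℝ≥0∞)⁻¹
      = 1/2 := by
    rw [hcoeA, hcoeB, ← ENNReal.rpow_mul, ← ENNReal.rpow_mul, ← ENNReal.rpow_neg,
      ← ENNReal.rpow_add _ _ (by norm_num) (by norm_num)]
    have e1 : (1/q) * (-q) = -1 := by field_simp
    have e2 : (1/q) * (2 - q) + -((2:ℝ)/q) = -1 := by field_simp; ring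
    rw [e1, e2, ENNReal.rpow_neg_one]
    have h24 : (4:ℝ≥0∞)⁻¹ = 2⁻¹ * 2⁻¹ := by
      rw [← ENNReal.mul_inv (Or.inl two_ne_zero) (Or.inl (by norm_num : (2:ℝ≥0∞) ≠ ∞))]
      norm_num
    rw [h24, ← mul_add, ENNReal.inv_two_add_inv_two, mul_one, one_div]
  rw [← hcoeff]
  exact hmain

end
end

section
/- Let p ∈ [2,∞), let Q₀ ∈ 𝒟, and let f : ℝ^n × (0,∞) → [0,∞) be σ×η-measurable with ∬_{Q̂₀} f μ dη dσ < ∞. Let 𝓕 be the stopping family for f with top cube Q₀ and parameter A = 4^{2/p'}. Then for every F ∈ 𝓕 one has ∑_{F'∈𝓕, F'⊆F} ‖φ_{F'}‖_{L^p(σ;ℓ²)}^p ≤ 2 ‖φ_F‖_{L^p(σ;ℓ²)}^p. -/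
open MeasureTheory ENNReal Set
open scoped Classical NNReal ENNReal

noncomputable section

/-- `Q ∈ ch_𝓕(F)`: a maximal dyadic cube `Q ⊆ F` with
`(∬_{Q̂} f μ)(∬_{F̂} φ_F μ) > A (∬_{F̂} f μ)(∬_{Q̂} φ_F μ)`. -/
def fStopChild (n : ℕ) (σ : Measure (Fin n → ℝ)) (μ f : (Fin n → ℝ) × ℝ → ℝ≥0∞)
    (p' : ℝ) (A : ℝ≥0∞) (F Q : CubeIdx n) : Prop :=
  idxCube n Q ⊆ idxCube n F ∧
  A * (boxInt n σ μ f F.1 F.2 * boxInt n σ μ (testFn n p' μ F.1 F.2) Q.1 Q.2)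
    < boxInt n σ μ f Q.1 Q.2 * boxInt n σ μ (testFn n p' μ F.1 F.2) F.1 F.2 ∧
  ∀ Q' : CubeIdx n, idxCube n Q ⊂ idxCube n Q' → idxCube n Q' ⊆ idxCube n F →
    ¬ (A * (boxInt n σ μ f F.1 F.2 * boxInt n σ μ (testFn n p' μ F.1 F.2) Q'.1 Q'.2)
        < boxInt n σ μ f Q'.1 Q'.2 * boxInt n σ μ (testFn n p' μ F.1 F.2) F.1 F.2)

/-- The stopping family `𝓕 = ⋃_{k≥0} 𝓕_k` for `f` with top cube `Q₀` and parameter `A`: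
the smallest family containing `Q₀` and closed under taking stopping children. -/
inductive fStop (n : ℕ) (σ : Measure (Fin n → ℝ)) (μ f : (Fin n → ℝ) × ℝ → ℝ≥0∞)
    (p' : ℝ) (A : ℝ≥0∞) (Q₀ : CubeIdx n) : CubeIdx n → Prop
  | top : fStop n σ μ f p' A Q₀ Q₀
  | child {F Q : CubeIdx n} : fStop n σ μ f p' A Q₀ F → fStopChild n σ μ f p' A F Q →
      fStop n σ μ f p' A Q₀ Q

section Geometry

variable {n : ℕ}

lemma dc_base_mem (k : ℤ) (m : Fin n → ℤ) :
    (fun i => (2:ℝ)^(-k) * (m i : ℝ)) ∈ dyadicCube n k m := by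
  intro i
  simp only
  have h : (0:ℝ) < (2:ℝ)^(-k) := zpow_pos (by norm_num) _
  exact ⟨le_refl _, by nlinarith⟩

lemma dc_nonempty (k : ℤ) (m : Fin n → ℤ) : (dyadicCube n k m).Nonempty :=
  ⟨_, dc_base_mem k m⟩

lemma interval_subset {k k' m m' : ℤ} (hk : k' ≤ k) {x : ℝ}
    (hx : x ∈ Set.Ico ((2:ℝ)^(-k) * (m:ℝ)) ((2:ℝ)^(-k) * ((m:ℝ)+1)))
    (hx' : x ∈ Set.Ico ((2:ℝ)^(-k') * (m':ℝ)) ((2:ℝ)^(-k') * ((m':ℝ)+1))) :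
    Set.Ico ((2:ℝ)^(-k) * (m:ℝ)) ((2:ℝ)^(-k) * ((m:ℝ)+1)) ⊆
      Set.Ico ((2:ℝ)^(-k') * (m':ℝ)) ((2:ℝ)^(-k') * ((m':ℝ)+1)) := by
  set d : ℤ := 2 ^ (k - k').toNat with hd_def
  have hA : (0:ℝ) < (2:ℝ)^(-k) := zpow_pos (by norm_num) _
  have hdR : ((d:ℝ)) = (2:ℝ)^(k - k') := by
    rw [hd_def]
    push_cast
    rw [← zpow_natCast]
    congr 1
    omega
  have hd2 : (2:ℝ)^(-k') = (2:ℝ)^(-k) * (d:ℝ) := by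
    rw [hdR, ← zpow_add₀ (by norm_num : (2:ℝ) ≠ 0)]
    congr 1
    ring
  obtain ⟨hx1, hx2⟩ := hx
  obtain ⟨hx3, hx4⟩ := hx'
  rw [hd2] at hx3 hx4
  -- integer inequalities
  have i1 : (d:ℝ) * (m':ℝ) < (m:ℝ) + 1 := by
    have := lt_of_le_of_lt hx3 hx2
    rw [mul_assoc] at this
    exact lt_of_mul_lt_mul_left this (le_of_lt hA)
  have i2 : (m:ℝ) < (d:ℝ) * ((m':ℝ)+1) := by
    have := lt_of_le_of_lt hx1 hx4
    rw [mul_assoc] at this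
    exact lt_of_mul_lt_mul_left this (le_of_lt hA)
  have j1 : d * m' ≤ m := by
    have : d * m' < m + 1 := by exact_mod_cast i1
    omega
  have j2 : m + 1 ≤ d * (m' + 1) := by
    have : m < d * (m' + 1) := by exact_mod_cast i2
    omega
  intro y hy
  obtain ⟨hy1, hy2⟩ := hy
  constructor
  · rw [hd2]
    calc (2:ℝ)^(-k) * (d:ℝ) * (m':ℝ) = (2:ℝ)^(-k) * ((d:ℝ) * (m':ℝ)) := by ring
    _ ≤ (2:ℝ)^(-k) * (m:ℝ) := by
        apply mul_le_mul_of_nonneg_left _ (le_of_lt hA)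
        exact_mod_cast j1
    _ ≤ y := hy1
  · rw [hd2]
    calc y < (2:ℝ)^(-k) * ((m:ℝ)+1) := hy2
    _ ≤ (2:ℝ)^(-k) * ((d:ℝ) * ((m':ℝ)+1)) := by
        apply mul_le_mul_of_nonneg_left _ (le_of_lt hA)
        exact_mod_cast j2
    _ = (2:ℝ)^(-k) * (d:ℝ) * ((m':ℝ)+1) := by ring

lemma cube_subset_of_mem {k k' : ℤ} {m m' : Fin n → ℤ} (hk : k' ≤ k) {x : Fin n → ℝ}
    (hx : x ∈ dyadicCube n k m) (hx' : x ∈ dyadicCube n k' m') :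
    dyadicCube n k m ⊆ dyadicCube n k' m' :=
  fun y hy i => interval_subset hk (hx i) (hx' i) (hy i)

lemma cube_tri {P Q : CubeIdx n} (h : (idxCube n P ∩ idxCube n Q).Nonempty) :
    idxCube n P ⊆ idxCube n Q ∨ idxCube n Q ⊆ idxCube n P := by
  obtain ⟨x, hxP, hxQ⟩ := h
  rcases le_total Q.1 P.1 with hk | hk
  · exact Or.inl (cube_subset_of_mem hk hxP hxQ)
  · exact Or.inr (cube_subset_of_mem hk hxQ hxP)

lemma interval_proj (hn : 0 < n) {P Q : CubeIdx n} (h : idxCube n P ⊆ idxCube n Q)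
    (i : Fin n) :
    Set.Ico ((2:ℝ)^(-P.1) * (P.2 i:ℝ)) ((2:ℝ)^(-P.1) * ((P.2 i:ℝ)+1)) ⊆
      Set.Ico ((2:ℝ)^(-Q.1) * (Q.2 i:ℝ)) ((2:ℝ)^(-Q.1) * ((Q.2 i:ℝ)+1)) := by
  intro t ht
  have hy : Function.update (fun j => (2:ℝ)^(-P.1) * (P.2 j : ℝ)) i t ∈ idxCube n P := by
    intro j
    rcases eq_or_ne j i with rfl | hj
    · simpa using ht
    · simp only [Function.update_of_ne hj]
      exact dc_base_mem P.1 P.2 j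
  have h2 := h hy i
  simpa [Function.update_self] using h2

end Geometry
section Geometry2

variable {n : ℕ}

lemma len_le {P Q : CubeIdx n} (h : idxCube n P ⊆ idxCube n Q) (hn : 0 < n) :
    (2:ℝ)^(-P.1) ≤ (2:ℝ)^(-Q.1) := by
  have hi := interval_proj hn h ⟨0, hn⟩
  have hlt : (2:ℝ)^(-P.1) * (P.2 ⟨0,hn⟩ : ℝ) < (2:ℝ)^(-P.1) * ((P.2 ⟨0,hn⟩ : ℝ)+1) := by
    have hA : (0:ℝ) < (2:ℝ)^(-P.1) := zpow_pos (by norm_num) _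
    nlinarith
  rw [Set.Ico_subset_Ico_iff hlt] at hi
  nlinarith [hi.1, hi.2]

lemma k_le {P Q : CubeIdx n} (h : idxCube n P ⊆ idxCube n Q) (hn : 0 < n) :
    Q.1 ≤ P.1 := by
  have := len_le h hn
  have h2 : -P.1 ≤ -Q.1 := by
    by_contra hc
    push_neg at hc
    have := zpow_lt_zpow_right₀ (by norm_num : (1:ℝ) < 2) hc
    linarith
  omega

lemma idx_inj {P Q : CubeIdx n} (h : idxCube n P = idxCube n Q) (hn : 0 < n) :
    P = Q := by
  have h1 : idxCube n P ⊆ idxCube n Q := h.le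
  have h2 : idxCube n Q ⊆ idxCube n P := h.ge
  have hk : P.1 = Q.1 := le_antisymm (k_le h2 hn) (k_le h1 hn)
  have hA : (0:ℝ) < (2:ℝ)^(-P.1) := zpow_pos (by norm_num) _
  have hm : P.2 = Q.2 := by
    funext i
    have hi := interval_proj hn h1 i
    have hlt : (2:ℝ)^(-P.1) * (P.2 i : ℝ) < (2:ℝ)^(-P.1) * ((P.2 i : ℝ)+1) := by nlinarith
    rw [Set.Ico_subset_Ico_iff hlt] at hi
    have hi' := interval_proj hn h2 i
    have hlt' : (2:ℝ)^(-Q.1) * (Q.2 i : ℝ) < (2:ℝ)^(-Q.1) * ((Q.2 i : ℝ)+1) := by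
      rw [← hk]; nlinarith
    rw [Set.Ico_subset_Ico_iff hlt'] at hi'
    rw [← hk] at hi hi'
    have : (P.2 i : ℝ) = (Q.2 i : ℝ) := by
      have e1 := hi.1
      have e2 := hi'.1
      have := le_antisymm (le_of_mul_le_mul_left e2 hA) (le_of_mul_le_mul_left e1 hA)
      linarith
    exact_mod_cast this
  exact Prod.ext hk hm

lemma box_mono {P Q : CubeIdx n} (h : idxCube n P ⊆ idxCube n Q) (hn : 0 < n) :
    carlesonBox n P.1 P.2 ⊆ carlesonBox n Q.1 Q.2 := by
  apply Set.prod_mono h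
  exact Set.Ioc_subset_Ioc (le_refl _) (len_le h hn)

end Geometry2
section Tree

variable {n : ℕ} {σ : Measure (Fin n → ℝ)} {μ f : (Fin n → ℝ) × ℝ → ℝ≥0∞}
  {p' : ℝ} {A : ℝ≥0∞} {Q₀ : CubeIdx n}

lemma fStop_subset {F : CubeIdx n} (h : fStop n σ μ f p' A Q₀ F) :
    idxCube n F ⊆ idxCube n Q₀ := by
  induction h with
  | top => exact le_refl _
  | child h1 h2 ih => exact h2.1.trans ih

lemma child_ne {F Q : CubeIdx n} (hA : 1 ≤ A) (h : fStopChild n σ μ f p' A F Q) :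
    Q ≠ F := by
  rintro rfl
  exact absurd h.2.1 (not_lt.mpr (le_mul_of_one_le_left (zero_le) hA))

lemma child_ssubset (hn : 0 < n) {F Q : CubeIdx n} (hA : 1 ≤ A)
    (h : fStopChild n σ μ f p' A F Q) : idxCube n Q ⊂ idxCube n F := by
  refine ⟨h.1, fun hsub => ?_⟩
  exact child_ne hA h (idx_inj (le_antisymm h.1 hsub) hn)

lemma stop_eq_top_of_child_lt (hn : 0 < n) {H G : CubeIdx n}
    (hG : fStopChild n σ μ f p' A H G) :
    ∀ {F : CubeIdx n}, fStop n σ μ f p' A H F → idxCube n G ⊂ idxCube n F → F = H := by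
  intro F hF
  induction hF with
  | top => intro _; rfl
  | @child F₂ Q h1 h2 ih =>
      intro hlt
      have hF₂ : F₂ = H := ih (hlt.trans_subset h2.1)
      subst hF₂
      exact absurd h2.2.1 (hG.2.2 Q hlt h2.1)

lemma reach_child (hn : 0 < n) (hA : 1 ≤ A) {H G : CubeIdx n}
    (hG : fStopChild n σ μ f p' A H G) :
    ∀ {F : CubeIdx n}, fStop n σ μ f p' A H F → idxCube n F ⊆ idxCube n G →
      fStop n σ μ f p' A G F := by
  intro F hF
  induction hF with
  | top =>
      intro hsub
      exact absurd (idx_inj (le_antisymm hG.1 hsub) hn) (child_ne hA hG)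
  | @child F₁ Q h1 h2 ih =>
      intro hsub
      obtain ⟨x, hx⟩ := dc_nonempty Q.1 Q.2
      have hx' : x ∈ idxCube n Q := hx
      rcases cube_tri ⟨x, h2.1 hx', hsub hx'⟩ with hF₁G | hGF₁
      · exact fStop.child (ih hF₁G) h2
      · by_cases hF₁G2 : idxCube n F₁ ⊆ idxCube n G
        · exact fStop.child (ih hF₁G2) h2
        · have hF₁H : F₁ = H := stop_eq_top_of_child_lt hn hG h1 ⟨hGF₁, hF₁G2⟩
          subst hF₁H
          by_cases hGQ : idxCube n G ⊆ idxCube n Q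
          · have : Q = G := idx_inj (le_antisymm hsub hGQ) hn
            subst this
            exact fStop.top
          · exact absurd hG.2.1 (h2.2.2 G ⟨hsub, hGQ⟩ hG.1)

lemma fStop_reach (hn : 0 < n) (hA : 1 ≤ A) :
    ∀ {F : CubeIdx n}, fStop n σ μ f p' A Q₀ F →
    ∀ {F' : CubeIdx n}, fStop n σ μ f p' A Q₀ F' →
      idxCube n F' ⊆ idxCube n F → fStop n σ μ f p' A F F' := by
  intro F hF
  induction hF with
  | top => intro F' h _; exact h
  | @child H F h1 h2 ih =>
      intro F' hF' hsub
      exact reach_child hn hA h2 (ih hF' (hsub.trans h2.1)) hsub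

end Tree
section Analysis1

variable {n : ℕ} {μ : (Fin n → ℝ) × ℝ → ℝ≥0∞}

/-- `S_Q(x) = ∑_k (1_{Q̂}μ)(x,2^{-k})²`, so that `vertL2 = S^{1/2}`. -/
def Sfun (n : ℕ) (μ : (Fin n → ℝ) × ℝ → ℝ≥0∞) (Q : CubeIdx n) (x : Fin n → ℝ) : ℝ≥0∞ :=
  ∑' k : ℤ, (boxFn n μ Q.1 Q.2 (x, (2:ℝ)^(-k)))^2

lemma vertL2_boxFn_eq (Q : CubeIdx n) (x : Fin n → ℝ) :
    vertL2 n (boxFn n μ Q.1 Q.2) x = (Sfun n μ Q x) ^ (1/2:ℝ) := rfl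

lemma Sfun_eq_sq (Q : CubeIdx n) (x : Fin n → ℝ) :
    Sfun n μ Q x = (vertL2 n (boxFn n μ Q.1 Q.2) x) ^ (2:ℝ) := by
  rw [vertL2_boxFn_eq, ← ENNReal.rpow_mul]
  norm_num

lemma meas_dc (k : ℤ) (m : Fin n → ℤ) : MeasurableSet (dyadicCube n k m) := by
  have : dyadicCube n k m =
      ⋂ i, (fun x : Fin n → ℝ => x i) ⁻¹'
        (Set.Ico ((2:ℝ)^(-k) * (m i : ℝ)) ((2:ℝ)^(-k) * ((m i : ℝ)+1))) := by
    ext x; simp [dyadicCube, Set.mem_iInter]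
  rw [this]
  exact MeasurableSet.iInter fun i => (measurable_pi_apply i) measurableSet_Ico

lemma meas_box (k : ℤ) (m : Fin n → ℤ) : MeasurableSet (carlesonBox n k m) :=
  (meas_dc k m).prod measurableSet_Ioc

lemma meas_boxFn (hμ : Measurable μ) (k : ℤ) (m : Fin n → ℤ) :
    Measurable (boxFn n μ k m) := hμ.indicator (meas_box k m)

lemma meas_slice {g : (Fin n → ℝ) × ℝ → ℝ≥0∞} (hg : Measurable g) (t : ℝ) :
    Measurable (fun x : Fin n → ℝ => g (x, t)) :=
  hg.comp (measurable_id.prodMk measurable_const)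

lemma meas_Sfun (hμ : Measurable μ) (Q : CubeIdx n) : Measurable (Sfun n μ Q) :=
  Measurable.ennreal_tsum fun k => (meas_slice (meas_boxFn hμ Q.1 Q.2) _).pow_const 2

lemma meas_V (hμ : Measurable μ) (Q : CubeIdx n) :
    Measurable (vertL2 n (boxFn n μ Q.1 Q.2)) := by
  have : vertL2 n (boxFn n μ Q.1 Q.2) = fun x => (Sfun n μ Q x) ^ (1/2:ℝ) := rfl
  rw [this]
  exact ENNReal.continuous_rpow_const.measurable.comp (meas_Sfun hμ Q)

lemma Sfun_mono {P Q : CubeIdx n} (h : idxCube n P ⊆ idxCube n Q) (hn : 0 < n)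
    (x : Fin n → ℝ) : Sfun n μ P x ≤ Sfun n μ Q x := by
  refine ENNReal.tsum_le_tsum fun k => ?_
  gcongr
  exact Set.indicator_le_indicator_of_subset (box_mono h hn) (fun _ => zero_le) _

lemma V_mono {P Q : CubeIdx n} (h : idxCube n P ⊆ idxCube n Q) (hn : 0 < n)
    (x : Fin n → ℝ) :
    vertL2 n (boxFn n μ P.1 P.2) x ≤ vertL2 n (boxFn n μ Q.1 Q.2) x := by
  rw [vertL2_boxFn_eq, vertL2_boxFn_eq]
  exact ENNReal.rpow_le_rpow (Sfun_mono h hn x) (by norm_num)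

lemma Sfun_zero_outside {Q : CubeIdx n} {x : Fin n → ℝ} (hx : x ∉ idxCube n Q) :
    Sfun n μ Q x = 0 := by
  simp only [Sfun, boxFn]
  refine ENNReal.tsum_eq_zero.mpr fun k => ?_
  rw [Set.indicator_of_notMem (fun hmem => hx hmem.1)]
  exact zero_pow (by norm_num)

lemma Sfun_zero_of_V_zero {Q : CubeIdx n} {x : Fin n → ℝ}
    (h : vertL2 n (boxFn n μ Q.1 Q.2) x = 0) : Sfun n μ Q x = 0 := by
  rw [vertL2_boxFn_eq] at h
  rcases (ENNReal.rpow_eq_zero_iff).mp h with ⟨h0, _⟩ | ⟨_, hneg⟩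
  · exact h0
  · norm_num at hneg

end Analysis1
section Analysis2

variable {n : ℕ} {μ : (Fin n → ℝ) × ℝ → ℝ≥0∞}

lemma testFn_apply (p' : ℝ) (Q : CubeIdx n) (x : Fin n → ℝ) (t : ℝ) :
    testFn n p' μ Q.1 Q.2 (x, t)
      = (if vertL2 n (boxFn n μ Q.1 Q.2) x = 0 then 0
          else (vertL2 n (boxFn n μ Q.1 Q.2) x)^(p'-2)) * boxFn n μ Q.1 Q.2 (x, t) := by
  by_cases h : vertL2 n (boxFn n μ Q.1 Q.2) x = 0
  · simp [testFn, h]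
  · simp [testFn, h]

lemma vertL2_testFn (p' : ℝ) (Q : CubeIdx n) (x : Fin n → ℝ) :
    vertL2 n (testFn n p' μ Q.1 Q.2) x
      = (if vertL2 n (boxFn n μ Q.1 Q.2) x = 0 then 0
          else (vertL2 n (boxFn n μ Q.1 Q.2) x)^(p'-2)) * vertL2 n (boxFn n μ Q.1 Q.2) x := by
  set c : ℝ≥0∞ := (if vertL2 n (boxFn n μ Q.1 Q.2) x = 0 then 0
          else (vertL2 n (boxFn n μ Q.1 Q.2) x)^(p'-2)) with hc
  have h1 : vertL2 n (testFn n p' μ Q.1 Q.2) x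
      = (∑' k : ℤ, (c * boxFn n μ Q.1 Q.2 (x, (2:ℝ)^(-k)))^2) ^ (1/2:ℝ) := by
    unfold vertL2
    congr 1
    exact tsum_congr fun k => by rw [testFn_apply]
  rw [h1]
  have h2 : ∀ k : ℤ, (c * boxFn n μ Q.1 Q.2 (x, (2:ℝ)^(-k)))^2
      = c^2 * (boxFn n μ Q.1 Q.2 (x, (2:ℝ)^(-k)))^2 := fun k => mul_pow _ _ 2
  rw [tsum_congr h2, ENNReal.tsum_mul_left,
    ENNReal.mul_rpow_of_nonneg _ _ (by norm_num : (0:ℝ) ≤ 1/2)]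
  have h3 : ((c^2 : ℝ≥0∞)) ^ (1/2:ℝ) = c := by
    rw [← ENNReal.rpow_natCast c 2, ← ENNReal.rpow_mul]
    norm_num
  rw [h3, vertL2_boxFn_eq]
  rfl

/-- `c(Q) = ∫ |1_{Q̂}μ|_{ℓ²}^{p'} dσ`. -/
def ccMass (n : ℕ) (σ : Measure (Fin n → ℝ)) (μ : (Fin n → ℝ) × ℝ → ℝ≥0∞) (p' : ℝ)
    (Q : CubeIdx n) : ℝ≥0∞ :=
  ∫⁻ x, (vertL2 n (boxFn n μ Q.1 Q.2) x) ^ p' ∂σ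

lemma mixedNorm_pow {σ : Measure (Fin n → ℝ)} {q : ℝ} (hq : 0 < q)
    (g : (Fin n → ℝ) × ℝ → ℝ≥0∞) :
    mixedNorm n σ q g ^ q = ∫⁻ x, (vertL2 n g x) ^ q ∂σ := by
  rw [mixedNorm, ← ENNReal.rpow_mul, one_div, inv_mul_cancel₀ (ne_of_gt hq),
    ENNReal.rpow_one]

lemma ccMass_lt_top {σ : Measure (Fin n → ℝ)} {p' : ℝ} (hp' : 0 < p') {Q : CubeIdx n}
    (h : mixedNorm n σ p' (boxFn n μ Q.1 Q.2) < ∞) : ccMass n σ μ p' Q < ∞ := by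
  have := mixedNorm_pow hp' (g := boxFn n μ Q.1 Q.2) (σ := σ)
  rw [ccMass, ← this]
  exact ENNReal.rpow_lt_top_of_nonneg (le_of_lt hp') h.ne

lemma ae_V_lt_top {σ : Measure (Fin n → ℝ)} {p' : ℝ} (hμ : Measurable μ) (hp' : 0 < p')
    {Q : CubeIdx n} (h : ccMass n σ μ p' Q < ∞) :
    ∀ᵐ x ∂σ, vertL2 n (boxFn n μ Q.1 Q.2) x < ∞ := by
  have hm : Measurable fun x => (vertL2 n (boxFn n μ Q.1 Q.2) x) ^ p' :=
    ENNReal.continuous_rpow_const.measurable.comp (meas_V hμ Q)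
  filter_upwards [ae_lt_top hm h.ne] with x hx
  by_contra hcon
  push_neg at hcon
  have : vertL2 n (boxFn n μ Q.1 Q.2) x = ∞ := top_le_iff.mp hcon
  rw [this, ENNReal.top_rpow_of_pos hp'] at hx
  exact absurd hx (lt_irrefl _)

lemma norm_testFn_eq_cc {σ : Measure (Fin n → ℝ)} {p p' : ℝ} (hμ : Measurable μ)
    (hp0 : 0 < p) (hp'0 : 0 < p') (hkey : (p' - 1) * p = p') {Q : CubeIdx n}
    (h : ccMass n σ μ p' Q < ∞) :
    mixedNorm n σ p (testFn n p' μ Q.1 Q.2) ^ p = ccMass n σ μ p' Q := by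
  rw [mixedNorm_pow hp0, ccMass]
  apply lintegral_congr_ae
  filter_upwards [ae_V_lt_top hμ hp'0 h] with x hx
  rw [vertL2_testFn]
  set V := vertL2 n (boxFn n μ Q.1 Q.2) x with hV
  by_cases h0 : V = 0
  · rw [if_pos h0, h0, mul_zero, ENNReal.zero_rpow_of_pos hp0,
      ENNReal.zero_rpow_of_pos hp'0]
  · rw [if_neg h0]
    have : V ^ (p'-2) * V = V ^ (p'-1) := by
      nth_rewrite 2 [← ENNReal.rpow_one V]
      rw [← ENNReal.rpow_add _ _ h0 hx.ne]
      congr 1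
      ring
    rw [this, ← ENNReal.rpow_mul, hkey]

lemma hold_lintegral {α : Type*} [MeasurableSpace α] (ν : Measure α) {θ : ℝ}
    (h1 : 0 < θ) (h2 : θ ≤ 1) {F G : α → ℝ≥0∞}
    (hF : AEMeasurable F ν) (hG : AEMeasurable G ν) :
    ∫⁻ a, (F a)^θ * (G a)^(1-θ) ∂ν ≤ (∫⁻ a, F a ∂ν)^θ * (∫⁻ a, G a ∂ν)^(1-θ) := by
  rcases eq_or_lt_of_le h2 with rfl | hlt
  · simp
  · have hθ' : 0 < 1 - θ := by linarith
    have hconj : Real.HolderConjugate (1/θ) (1/(1-θ)) := by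
      rw [Real.holderConjugate_iff]
      constructor
      · rw [lt_div_iff₀ h1]; linarith
      · rw [one_div, one_div, inv_inv, inv_inv]; ring
    have hFm : AEMeasurable (fun a => (F a)^θ) ν :=
      ENNReal.continuous_rpow_const.measurable.comp_aemeasurable hF
    have hGm : AEMeasurable (fun a => (G a)^(1-θ)) ν :=
      ENNReal.continuous_rpow_const.measurable.comp_aemeasurable hG
    have := ENNReal.lintegral_mul_le_Lp_mul_Lq ν hconj hFm hGm
    simp only [Pi.mul_apply] at this
    convert this using 2
    · rw [one_div_one_div]
      congr 1
      apply lintegral_congr fun a => ?_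
      rw [← ENNReal.rpow_mul]
      rw [mul_one_div, div_self (ne_of_gt h1), ENNReal.rpow_one]
    · rw [one_div_one_div]
      congr 1
      apply lintegral_congr fun a => ?_
      rw [← ENNReal.rpow_mul]
      rw [mul_one_div, div_self (ne_of_gt hθ'), ENNReal.rpow_one]

end Analysis2
section Analysis3

variable {n : ℕ} {σ : Measure (Fin n → ℝ)} {μ : (Fin n → ℝ) × ℝ → ℝ≥0∞}

/-- vertical sum of `g μ` at scales `≤ 2^{-k}`. -/
def rowSum (n : ℕ) (μ g : (Fin n → ℝ) × ℝ → ℝ≥0∞) (k : ℤ) (x : Fin n → ℝ) : ℝ≥0∞ :=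
  ∑' j : ℤ, if (2:ℝ)^j ≤ (2:ℝ)^(-k) then g (x, (2:ℝ)^j) * μ (x, (2:ℝ)^j) else 0

lemma boxInt_eq_lintegral (hg : Measurable g) (hμ : Measurable μ) (k : ℤ) (m : Fin n → ℤ) :
    boxInt n σ μ g k m = ∫⁻ x in dyadicCube n k m, rowSum n μ g k x ∂σ := by
  unfold boxInt rowSum
  rw [lintegral_tsum]
  · refine tsum_congr fun j => ?_
    split_ifs with hc
    · rfl
    · simp
  · intro j
    by_cases hc : (2:ℝ)^j ≤ (2:ℝ)^(-k) <;> simp only [hc, if_true, if_false]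
    · exact ((meas_slice hg _).mul (meas_slice hμ _)).aemeasurable
    · exact measurable_const.aemeasurable

lemma rowSum_mono {g : (Fin n → ℝ) × ℝ → ℝ≥0∞} {P F : CubeIdx n}
    (h : idxCube n P ⊆ idxCube n F) (hn : 0 < n) (x : Fin n → ℝ) :
    rowSum n μ g P.1 x ≤ rowSum n μ g F.1 x := by
  refine ENNReal.tsum_le_tsum fun j => ?_
  by_cases hc : (2:ℝ)^j ≤ (2:ℝ)^(-P.1)
  · rw [if_pos hc, if_pos (hc.trans (len_le h hn))]
  · rw [if_neg hc]
    exact zero_le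

lemma boxInt_mono {g : (Fin n → ℝ) × ℝ → ℝ≥0∞} (hg : Measurable g) (hμ : Measurable μ)
    {P F : CubeIdx n} (h : idxCube n P ⊆ idxCube n F) (hn : 0 < n) :
    boxInt n σ μ g P.1 P.2 ≤ boxInt n σ μ g F.1 F.2 := by
  rw [boxInt_eq_lintegral hg hμ, boxInt_eq_lintegral hg hμ]
  calc ∫⁻ x in dyadicCube n P.1 P.2, rowSum n μ g P.1 x ∂σ
      ≤ ∫⁻ x in dyadicCube n P.1 P.2, rowSum n μ g F.1 x ∂σ :=
        lintegral_mono fun x => rowSum_mono h hn x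
    _ ≤ ∫⁻ x in dyadicCube n F.1 F.2, rowSum n μ g F.1 x ∂σ := lintegral_mono_set h

lemma sum_boxInt_le {g : (Fin n → ℝ) × ℝ → ℝ≥0∞} (hg : Measurable g) (hμ : Measurable μ)
    {ι : Type*} [Countable ι] (Q : ι → CubeIdx n) {F : CubeIdx n}
    (hsub : ∀ i, idxCube n (Q i) ⊆ idxCube n F)
    (hdisj : Pairwise (Function.onFun Disjoint fun i => idxCube n (Q i))) (hn : 0 < n) :
    ∑' i, boxInt n σ μ g (Q i).1 (Q i).2 ≤ boxInt n σ μ g F.1 F.2 := by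
  calc ∑' i, boxInt n σ μ g (Q i).1 (Q i).2
      ≤ ∑' i, ∫⁻ x in idxCube n (Q i), rowSum n μ g F.1 x ∂σ := by
        refine ENNReal.tsum_le_tsum fun i => ?_
        rw [boxInt_eq_lintegral hg hμ]
        exact lintegral_mono fun x => rowSum_mono (hsub i) hn x
    _ = ∫⁻ x in ⋃ i, idxCube n (Q i), rowSum n μ g F.1 x ∂σ :=
        (lintegral_iUnion (fun i => meas_dc _ _) hdisj _).symm
    _ ≤ ∫⁻ x in idxCube n F, rowSum n μ g F.1 x ∂σ :=
        lintegral_mono_set (Set.iUnion_subset hsub)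
    _ = boxInt n σ μ g F.1 F.2 := (boxInt_eq_lintegral hg hμ _ _).symm

variable {f : (Fin n → ℝ) × ℝ → ℝ≥0∞} {p' : ℝ} {A : ℝ≥0∞}

lemma child_disj_aux (hn : 0 < n) {F Q Q' : CubeIdx n}
    (hQ : fStopChild n σ μ f p' A F Q) (hQ' : fStopChild n σ μ f p' A F Q')
    (hss : idxCube n Q ⊆ idxCube n Q') (hne : Q ≠ Q') : False := by
  by_cases h : idxCube n Q' ⊆ idxCube n Q
  · exact hne (idx_inj (le_antisymm hss h) hn)
  · exact absurd hQ'.2.1 (hQ.2.2 Q' (lt_iff_le_not_ge.mpr ⟨hss, h⟩) hQ'.1)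

lemma children_pairwise (hn : 0 < n) {F : CubeIdx n} :
    Pairwise (Function.onFun Disjoint fun Q : {Q // fStopChild n σ μ f p' A F Q} => idxCube n Q.1) := by
  intro a b hne
  rw [Function.onFun]
  by_contra hcon
  obtain ⟨x, hxa, hxb⟩ := Set.not_disjoint_iff.mp hcon
  rcases cube_tri ⟨x, hxa, hxb⟩ with h | h
  · exact child_disj_aux hn a.2 b.2 h (fun he => hne (Subtype.ext he))
  · exact child_disj_aux hn b.2 a.2 h (fun he => hne (Subtype.ext he.symm))

end Analysis3
section Analysis4

variable {n : ℕ} {σ : Measure (Fin n → ℝ)} {μ : (Fin n → ℝ) × ℝ → ℝ≥0∞}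

/-- the coefficient `|1_{F̂}μ|_{ℓ²}^{p'-2}` (with the zero convention). -/
def tcoef (n : ℕ) (μ : (Fin n → ℝ) × ℝ → ℝ≥0∞) (p' : ℝ) (F : CubeIdx n)
    (x : Fin n → ℝ) : ℝ≥0∞ :=
  if vertL2 n (boxFn n μ F.1 F.2) x = 0 then 0
  else (vertL2 n (boxFn n μ F.1 F.2) x)^(p'-2)

lemma meas_tcoef (hμ : Measurable μ) (p' : ℝ) (F : CubeIdx n) :
    Measurable (tcoef n μ p' F) := by
  unfold tcoef
  refine Measurable.ite ?_ measurable_const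
    (ENNReal.continuous_rpow_const.measurable.comp (meas_V hμ F))
  exact (meas_V hμ F) (measurableSet_singleton 0)

lemma meas_testFn (hμ : Measurable μ) (p' : ℝ) (F : CubeIdx n) :
    Measurable (testFn n p' μ F.1 F.2) := by
  unfold testFn
  refine Measurable.ite ?_ measurable_const ?_
  · exact ((meas_V hμ F).comp measurable_fst) (measurableSet_singleton 0)
  · exact (ENNReal.continuous_rpow_const.measurable.comp
      ((meas_V hμ F).comp measurable_fst)).mul (meas_boxFn hμ F.1 F.2)

lemma Sfun_row {Q : CubeIdx n} {x : Fin n → ℝ} (hx : x ∈ idxCube n Q) :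
    Sfun n μ Q x = ∑' j : ℤ, (if (2:ℝ)^j ≤ (2:ℝ)^(-Q.1) then (μ (x, (2:ℝ)^j))^2 else 0) := by
  have h1 : Sfun n μ Q x = ∑' k : ℤ, (fun j : ℤ => (boxFn n μ Q.1 Q.2 (x, (2:ℝ)^j))^2)
      ((Equiv.neg ℤ) k) := by
    refine tsum_congr fun k => ?_
    simp [Equiv.neg]
  have h2 := Equiv.tsum_eq (Equiv.neg ℤ) (fun j : ℤ => (boxFn n μ Q.1 Q.2 (x, (2:ℝ)^j))^2)
  rw [h1, h2]
  refine tsum_congr fun j => ?_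
  by_cases hc : (2:ℝ)^j ≤ (2:ℝ)^(-Q.1)
  · rw [if_pos hc]
    unfold boxFn
    rw [Set.indicator_of_mem]
    exact ⟨hx, zpow_pos (by norm_num) _, hc⟩
  · rw [if_neg hc]
    unfold boxFn
    rw [Set.indicator_of_notMem]
    · simp
    · intro hmem
      exact hc hmem.2.2

lemma testB_eq (hμ : Measurable μ) (hn : 0 < n) {p' : ℝ} {Q F : CubeIdx n}
    (hsub : idxCube n Q ⊆ idxCube n F) :
    boxInt n σ μ (testFn n p' μ F.1 F.2) Q.1 Q.2
      = ∫⁻ x in idxCube n Q, tcoef n μ p' F x * Sfun n μ Q x ∂σ := by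
  rw [boxInt_eq_lintegral (meas_testFn hμ p' F) hμ]
  refine setLIntegral_congr_fun (meas_dc _ _) (fun x hx => ?_)
  unfold rowSum
  have hstep : ∀ j : ℤ,
      (if (2:ℝ)^j ≤ (2:ℝ)^(-Q.1) then
          testFn n p' μ F.1 F.2 (x, (2:ℝ)^j) * μ (x, (2:ℝ)^j) else 0)
      = tcoef n μ p' F x * (if (2:ℝ)^j ≤ (2:ℝ)^(-Q.1) then (μ (x, (2:ℝ)^j))^2 else 0) := by
    intro j
    by_cases hc : (2:ℝ)^j ≤ (2:ℝ)^(-Q.1)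
    · rw [if_pos hc, if_pos hc, testFn_apply]
      have hbox : boxFn n μ F.1 F.2 (x, (2:ℝ)^j) = μ (x, (2:ℝ)^j) := by
        unfold boxFn
        rw [Set.indicator_of_mem]
        exact ⟨hsub hx, zpow_pos (by norm_num) _, hc.trans (len_le hsub hn)⟩
      rw [hbox]
      unfold tcoef
      ring
    · rw [if_neg hc, if_neg hc, mul_zero]
  rw [tsum_congr hstep, ENNReal.tsum_mul_left, Sfun_row hx]

lemma tcoef_S_eq {p' : ℝ} (hp'0 : 0 < p') {F : CubeIdx n} {x : Fin n → ℝ}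
    (hV : vertL2 n (boxFn n μ F.1 F.2) x ≠ ∞) :
    tcoef n μ p' F x * Sfun n μ F x = (vertL2 n (boxFn n μ F.1 F.2) x) ^ p' := by
  set V := vertL2 n (boxFn n μ F.1 F.2) x with hVdef
  by_cases h0 : V = 0
  · unfold tcoef
    rw [← hVdef, if_pos h0, zero_mul, h0, ENNReal.zero_rpow_of_pos hp'0]
  · unfold tcoef
    rw [← hVdef, if_neg h0, Sfun_eq_sq, ← hVdef, ← ENNReal.rpow_add _ _ h0 hV]
    congr 1
    ring

lemma pointwise_holder {p' : ℝ} (hp'0 : 0 < p') {Q F : CubeIdx n}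
    (hsub : idxCube n Q ⊆ idxCube n F) (hn : 0 < n) {x : Fin n → ℝ}
    (hV : vertL2 n (boxFn n μ F.1 F.2) x ≠ ∞) :
    (Sfun n μ Q x)^(p'/2)
      ≤ (tcoef n μ p' F x * Sfun n μ Q x)^(p'/2)
        * ((idxCube n Q).indicator
            (fun y => (vertL2 n (boxFn n μ F.1 F.2) y) ^ p') x)^(1-p'/2) := by
  by_cases hxQ : x ∈ idxCube n Q
  swap
  · rw [Sfun_zero_outside hxQ, ENNReal.zero_rpow_of_pos (by positivity)]
    exact zero_le
  by_cases hS : Sfun n μ Q x = 0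
  · rw [hS, ENNReal.zero_rpow_of_pos (by positivity)]
    exact zero_le
  set V := vertL2 n (boxFn n μ F.1 F.2) x with hVdef
  have hV0 : V ≠ 0 := by
    intro h
    have hSF : Sfun n μ F x = 0 := Sfun_zero_of_V_zero h
    exact hS (le_antisymm (hSF ▸ Sfun_mono hsub hn x) (zero_le))
  rw [Set.indicator_of_mem hxQ]
  have htc : tcoef n μ p' F x = V ^ (p'-2) := by
    unfold tcoef
    rw [← hVdef, if_neg hV0]
  rw [htc, ENNReal.mul_rpow_of_nonneg _ _ (by positivity : (0:ℝ) ≤ p'/2)]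
  have hkey : (V ^ (p'-2))^(p'/2) * ((V:ℝ≥0∞) ^ p')^(1-p'/2) = 1 := by
    rw [← ENNReal.rpow_mul, ← ENNReal.rpow_mul, ← ENNReal.rpow_add _ _ hV0 hV]
    have : (p'-2)*(p'/2) + p'*(1-p'/2) = 0 := by ring
    rw [this, ENNReal.rpow_zero]
  apply le_of_eq
  rw [mul_comm ((V ^ (p'-2))^(p'/2)) ((Sfun n μ Q x)^(p'/2)), mul_assoc, hkey, mul_one]

end Analysis4
section Analysis5

variable {n : ℕ} {σ : Measure (Fin n → ℝ)} {μ f : (Fin n → ℝ) × ℝ → ℝ≥0∞}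

lemma ccMass_mono {p' : ℝ} (hp'0 : 0 ≤ p') {P Q : CubeIdx n}
    (h : idxCube n P ⊆ idxCube n Q) (hn : 0 < n) :
    ccMass n σ μ p' P ≤ ccMass n σ μ p' Q :=
  lintegral_mono fun x => ENNReal.rpow_le_rpow (V_mono h hn x) hp'0

lemma ccMass_as_S {p' : ℝ} (Q : CubeIdx n) :
    ccMass n σ μ p' Q = ∫⁻ x, (Sfun n μ Q x) ^ (p'/2) ∂σ := by
  refine lintegral_congr fun x => ?_
  rw [vertL2_boxFn_eq, ← ENNReal.rpow_mul]
  congr 1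
  ring

lemma ccMass_lt_top' {σ : Measure (Fin n → ℝ)} {p p' : ℝ} (hp'0 : 0 < p')
    (hfin : ∀ Q : CubeIdx n, mixedNorm n σ p' (boxFn n μ Q.1 Q.2) < ∞) (Q : CubeIdx n) :
    ccMass n σ μ p' Q < ∞ := ccMass_lt_top hp'0 (hfin Q)

/-- The key per-level estimate: the children of a stopping cube `F` carry at most
`A⁻¹`-fraction of the `φ_F`-mass, which by Hölder bounds their own `φ`-masses. -/
lemma level_bound {p' : ℝ} {A : ℝ≥0∞} {Q₀ F : CubeIdx n}
    (hn : 0 < n) (hμ : Measurable μ) (hf : Measurable f)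
    (hp'1 : 1 < p') (hp'2 : p' ≤ 2)
    (hA : A = (4 : ℝ≥0∞) ^ (2/p'))
    (hfin : ∀ Q : CubeIdx n, mixedNorm n σ p' (boxFn n μ Q.1 Q.2) < ∞)
    (hffin : boxInt n σ μ f Q₀.1 Q₀.2 < ∞)
    (hF : fStop n σ μ f p' A Q₀ F) :
    ∑' Q : {Q // fStopChild n σ μ f p' A F Q}, ccMass n σ μ p' Q.1
      ≤ 4⁻¹ * ccMass n σ μ p' F := by
  have hp'0 : 0 < p' := lt_trans one_pos hp'1
  set θ : ℝ := p'/2 with hθdef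
  have hθ0 : 0 < θ := by positivity
  have hθ1 : θ ≤ 1 := by rw [hθdef]; linarith
  have hccF : ccMass n σ μ p' F < ∞ := ccMass_lt_top hp'0 (hfin F)
  by_cases hcc0 : ccMass n σ μ p' F = 0
  · have : ∀ Q : {Q // fStopChild n σ μ f p' A F Q}, ccMass n σ μ p' Q.1 = 0 := by
      intro Q
      exact le_antisymm (le_trans (ccMass_mono (le_of_lt hp'0) Q.2.1 hn) hcc0.le) (zero_le)
    rw [tsum_congr this]
    simp
  -- notation
  set ι := {Q // fStopChild n σ μ f p' A F Q}
  set B : ι → ℝ≥0∞ := fun i =>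
    boxInt n σ μ (testFn n p' μ F.1 F.2) i.1.1 i.1.2 with hBdef
  set D : ι → ℝ≥0∞ := fun i =>
    ∫⁻ x in idxCube n i.1, (vertL2 n (boxFn n μ F.1 F.2) x) ^ p' ∂σ with hDdef
  have hdisj : Pairwise (Function.onFun Disjoint fun i : ι => idxCube n i.1) := children_pairwise hn
  have hDsum : ∑' i : ι, D i ≤ ccMass n σ μ p' F := by
    have h1 := lintegral_iUnion (μ := σ) (s := fun i : ι => idxCube n i.1)
      (fun i => meas_dc (i.1).1 (i.1).2) hdisj
      (fun x => (vertL2 n (boxFn n μ F.1 F.2) x) ^ p')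
    exact le_trans (le_of_eq h1.symm) (setLIntegral_le_lintegral _ _)
  -- Hölder per child
  have hhold : ∀ i : ι, ccMass n σ μ p' i.1 ≤ (B i)^θ * (D i)^(1-θ) := by
    intro i
    have hae := ae_V_lt_top hμ hp'0 (ccMass_lt_top hp'0 (hfin F))
    have step1 : ccMass n σ μ p' i.1 ≤
        ∫⁻ x, (tcoef n μ p' F x * Sfun n μ i.1 x)^θ
          * ((idxCube n i.1).indicator
              (fun y => (vertL2 n (boxFn n μ F.1 F.2) y) ^ p') x)^(1-θ) ∂σ := by
      rw [ccMass_as_S]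
      refine lintegral_mono_ae ?_
      filter_upwards [hae] with x hx
      exact pointwise_holder hp'0 i.2.1 hn hx.ne
    have hmeas1 : AEMeasurable (fun x => tcoef n μ p' F x * Sfun n μ i.1 x) σ :=
      ((meas_tcoef hμ p' F).mul (meas_Sfun hμ i.1)).aemeasurable
    have hmeas2 : AEMeasurable ((idxCube n i.1).indicator
        (fun y => (vertL2 n (boxFn n μ F.1 F.2) y) ^ p')) σ :=
      ((ENNReal.continuous_rpow_const.measurable.comp (meas_V hμ F)).indicator
        (meas_dc _ _)).aemeasurable
    have step2 := hold_lintegral σ hθ0 hθ1 hmeas1 hmeas2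
    have hms : MeasurableSet (idxCube n i.1) := meas_dc (i.1).1 (i.1).2
    have hint1 : ∫⁻ x, tcoef n μ p' F x * Sfun n μ i.1 x ∂σ = B i := by
      have h2 : boxInt n σ μ (testFn n p' μ F.1 F.2) i.1.1 i.1.2
          = ∫⁻ x in idxCube n i.1, tcoef n μ p' F x * Sfun n μ i.1 x ∂σ :=
        testB_eq hμ hn i.2.1
      show _ = boxInt n σ μ (testFn n p' μ F.1 F.2) i.1.1 i.1.2
      rw [h2, ← lintegral_indicator hms]
      refine lintegral_congr fun x => ?_
      by_cases hx : x ∈ idxCube n i.1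
      · rw [Set.indicator_of_mem hx]
      · rw [Set.indicator_of_notMem hx, Sfun_zero_outside hx, mul_zero]
    have hint2 : ∫⁻ x, ((idxCube n i.1).indicator
        (fun y => (vertL2 n (boxFn n μ F.1 F.2) y) ^ p')) x ∂σ = D i := by
      rw [lintegral_indicator hms]
    calc ccMass n σ μ p' i.1 ≤ _ := step1
      _ ≤ _ := step2
      _ = (B i)^θ * (D i)^(1-θ) := by rw [hint1, hint2]
  -- stopping condition sum
  have hA0 : A ≠ 0 := by
    rw [hA]; exact (ENNReal.rpow_pos (by norm_num) (by norm_num)).ne'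
  have hAtop : A ≠ ∞ := by
    rw [hA]; exact ENNReal.rpow_ne_top_of_nonneg (by positivity) (by norm_num)
  have hBsum : ∑' i : ι, B i ≤ A⁻¹ * ccMass n σ μ p' F := by
    set bfF := boxInt n σ μ f F.1 F.2 with hbf
    by_cases hbf0 : bfF = 0
    · have hempty : IsEmpty ι := by
        constructor
        intro i
        have hcond := i.2.2.1
        have hle : boxInt n σ μ f i.1.1 i.1.2 ≤ bfF := boxInt_mono hf hμ i.2.1 hn
        rw [hbf0] at hle
        rw [← hbf, hbf0] at hcond
        simp only [zero_mul, mul_zero] at hcond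
        rw [le_zero_iff.mp hle, zero_mul] at hcond
        exact absurd hcond (lt_irrefl 0)
      rw [tsum_empty]
      exact zero_le
    · have hbftop : bfF ≠ ∞ :=
        (lt_of_le_of_lt (boxInt_mono hf hμ (fStop_subset hF) hn) hffin).ne
      set BF := boxInt n σ μ (testFn n p' μ F.1 F.2) F.1 F.2 with hBF
      have hchild : ∀ i : ι, A * (bfF * B i) ≤ boxInt n σ μ f i.1.1 i.1.2 * BF :=
        fun i => (i.2.2.1).le
      have hsum1 : A * bfF * ∑' i : ι, B i ≤ (∑' i : ι, boxInt n σ μ f i.1.1 i.1.2) * BF := by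
        rw [← ENNReal.tsum_mul_right]
        calc A * bfF * ∑' i : ι, B i = ∑' i : ι, A * (bfF * B i) := by
              rw [← ENNReal.tsum_mul_left]
              exact tsum_congr fun i => by ring
          _ ≤ _ := ENNReal.tsum_le_tsum hchild
      have hsum2 : (∑' i : ι, boxInt n σ μ f i.1.1 i.1.2) ≤ bfF :=
        sum_boxInt_le hf hμ (fun i : ι => i.1) (fun i => i.2.1) hdisj hn
      have hBFle : BF ≤ ccMass n σ μ p' F := by
        rw [hBF, testB_eq hμ hn (le_refl _)]
        calc ∫⁻ x in idxCube n F, tcoef n μ p' F x * Sfun n μ F x ∂σ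
            ≤ ∫⁻ x in idxCube n F, (vertL2 n (boxFn n μ F.1 F.2) x) ^ p' ∂σ := by
              refine lintegral_mono_ae ?_
              filter_upwards [ae_restrict_of_ae (ae_V_lt_top hμ hp'0 hccF)] with x hx
              exact (tcoef_S_eq hp'0 hx.ne).le
          _ ≤ ccMass n σ μ p' F := setLIntegral_le_lintegral _ _
      have hfinal : A * (∑' i : ι, B i) ≤ ccMass n σ μ p' F := by
        have h1 : bfF * (A * ∑' i : ι, B i) ≤ bfF * BF := by
          calc bfF * (A * ∑' i : ι, B i) = A * bfF * ∑' i : ι, B i := by ring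
            _ ≤ (∑' i : ι, boxInt n σ μ f i.1.1 i.1.2) * BF := hsum1
            _ ≤ bfF * BF := mul_le_mul_left hsum2 _
        exact le_trans ((ENNReal.mul_le_mul_iff_right hbf0 hbftop).mp h1) hBFle
      calc ∑' i : ι, B i = A⁻¹ * (A * ∑' i : ι, B i) := by
            rw [← mul_assoc, ENNReal.inv_mul_cancel hA0 hAtop, one_mul]
        _ ≤ A⁻¹ * ccMass n σ μ p' F := mul_le_mul_right hfinal _
  -- tsum Hölder
  have htsum : ∑' i : ι, (B i)^θ * (D i)^(1-θ)
      ≤ (∑' i : ι, B i)^θ * (∑' i : ι, D i)^(1-θ) := by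
    rw [← lintegral_count, ← lintegral_count (fun i : ι => B i), ← lintegral_count (fun i : ι => D i)]
    exact hold_lintegral _ hθ0 hθ1 (measurable_of_countable _).aemeasurable
      (measurable_of_countable _).aemeasurable
  have hAθ : (A⁻¹)^θ = 4⁻¹ := by
    rw [hA, ← ENNReal.rpow_neg, ← ENNReal.rpow_mul]
    have : -(2/p') * θ = -1 := by
      rw [hθdef]; field_simp
    rw [this]
    simp [ENNReal.rpow_neg_one]
  calc ∑' i : ι, ccMass n σ μ p' i.1 ≤ ∑' i : ι, (B i)^θ * (D i)^(1-θ) :=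
        ENNReal.tsum_le_tsum hhold
    _ ≤ (∑' i : ι, B i)^θ * (∑' i : ι, D i)^(1-θ) := htsum
    _ ≤ (A⁻¹ * ccMass n σ μ p' F)^θ * (∑' i : ι, D i)^(1-θ) :=
        mul_le_mul_left (ENNReal.rpow_le_rpow hBsum hθ0.le) _
    _ ≤ (A⁻¹ * ccMass n σ μ p' F)^θ * (ccMass n σ μ p' F)^(1-θ) :=
        mul_le_mul_right (ENNReal.rpow_le_rpow hDsum (by linarith)) _
    _ = 4⁻¹ * ccMass n σ μ p' F := by
        rw [ENNReal.mul_rpow_of_nonneg _ _ hθ0.le, hAθ, mul_assoc,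
          ← ENNReal.rpow_add _ _ hcc0 hccF.ne]
        have hθs : θ + (1-θ) = 1 := by ring
        rw [hθs, ENNReal.rpow_one]
end Analysis5
section Final

variable {n : ℕ} {σ : Measure (Fin n → ℝ)} {μ f : (Fin n → ℝ) × ℝ → ℝ≥0∞}

/-- `genSet F m Q`: `Q` is an `m`-fold iterated stopping child of `F`. -/
def genSet (n : ℕ) (σ : Measure (Fin n → ℝ)) (μ f : (Fin n → ℝ) × ℝ → ℝ≥0∞)
    (p' : ℝ) (A : ℝ≥0∞) (F : CubeIdx n) : ℕ → CubeIdx n → Prop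
  | 0, Q => Q = F
  | (m+1), Q => ∃ F', genSet n σ μ f p' A F m F' ∧ fStopChild n σ μ f p' A F' Q

lemma exists_gen {p' : ℝ} {A : ℝ≥0∞} {F F' : CubeIdx n}
    (h : fStop n σ μ f p' A F F') : ∃ m, genSet n σ μ f p' A F m F' := by
  induction h with
  | top => exact ⟨0, rfl⟩
  | child h1 h2 ih =>
      obtain ⟨m, hm⟩ := ih
      exact ⟨m+1, _, hm, h2⟩

lemma gen_fStop {p' : ℝ} {A : ℝ≥0∞} {F : CubeIdx n} :
    ∀ {m : ℕ} {F' : CubeIdx n}, genSet n σ μ f p' A F m F' → fStop n σ μ f p' A F F' := by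
  intro m
  induction m with
  | zero => intro F' h; rw [show F' = F from h]; exact fStop.top
  | succ m ih =>
      intro F' h
      obtain ⟨G, hG, hch⟩ := h
      exact fStop.child (ih hG) hch

lemma fStop_trans {p' : ℝ} {A : ℝ≥0∞} {Q₀ F F' : CubeIdx n}
    (h1 : fStop n σ μ f p' A Q₀ F) (h2 : fStop n σ μ f p' A F F') :
    fStop n σ μ f p' A Q₀ F' := by
  induction h2 with
  | top => exact h1
  | child ha hb ih => exact fStop.child ih hb

lemma gen_sum {p' : ℝ} {A : ℝ≥0∞} {Q₀ F : CubeIdx n}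
    (hn : 0 < n) (hμ : Measurable μ) (hf : Measurable f)
    (hp'1 : 1 < p') (hp'2 : p' ≤ 2) (hA : A = (4 : ℝ≥0∞) ^ (2/p'))
    (hfin : ∀ Q : CubeIdx n, mixedNorm n σ p' (boxFn n μ Q.1 Q.2) < ∞)
    (hffin : boxInt n σ μ f Q₀.1 Q₀.2 < ∞)
    (hF : fStop n σ μ f p' A Q₀ F) :
    ∀ m : ℕ, ∑' Q : {Q // genSet n σ μ f p' A F m Q}, ccMass n σ μ p' Q.1
      ≤ (4⁻¹ : ℝ≥0∞)^m * ccMass n σ μ p' F := by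
  intro m
  induction m with
  | zero =>
      rw [tsum_eq_single (⟨F, rfl⟩ : {Q // genSet n σ μ f p' A F 0 Q})
        (fun b' hb' => absurd (Subtype.ext (show (b':CubeIdx n) = F from b'.2)) hb')]
      simp
  | succ m ih =>
      classical
      set T := Σ (G : {G // genSet n σ μ f p' A F m G}),
        {Q // fStopChild n σ μ f p' A G.1 Q} with hT
      set emb : {Q // genSet n σ μ f p' A F (m+1) Q} → T := fun Q =>
        ⟨⟨Classical.choose Q.2, (Classical.choose_spec Q.2).1⟩,
          ⟨Q.1, (Classical.choose_spec Q.2).2⟩⟩ with hemb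
      have hinj : Function.Injective emb := by
        intro a b hab
        exact Subtype.ext (congrArg (fun z : T => (z.2.1 : CubeIdx n)) hab)
      calc ∑' Q : {Q // genSet n σ μ f p' A F (m+1) Q}, ccMass n σ μ p' Q.1
          = ∑' Q, (fun z : T => ccMass n σ μ p' z.2.1) (emb Q) := tsum_congr fun Q => rfl
        _ ≤ ∑' z : T, ccMass n σ μ p' z.2.1 := tsum_comp_le_tsum_of_injective hinj _
        _ = ∑' G : {G // genSet n σ μ f p' A F m G},
              ∑' Q : {Q // fStopChild n σ μ f p' A G.1 Q}, ccMass n σ μ p' Q.1 :=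
            ENNReal.tsum_sigma
              (β := fun G : {G // genSet n σ μ f p' A F m G} =>
                {Q // fStopChild n σ μ f p' A G.1 Q})
              (fun _ Q => ccMass n σ μ p' Q.1)
        _ ≤ ∑' G : {G // genSet n σ μ f p' A F m G}, 4⁻¹ * ccMass n σ μ p' G.1 :=
            ENNReal.tsum_le_tsum fun G => level_bound hn hμ hf hp'1 hp'2 hA hfin hffin
              (fStop_trans hF (gen_fStop G.2))
        _ = 4⁻¹ * ∑' G : {G // genSet n σ μ f p' A F m G}, ccMass n σ μ p' G.1 :=
            ENNReal.tsum_mul_left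
        _ ≤ 4⁻¹ * ((4⁻¹ : ℝ≥0∞)^m * ccMass n σ μ p' F) := mul_le_mul_right ih _
        _ = (4⁻¹ : ℝ≥0∞)^(m+1) * ccMass n σ μ p' F := by ring

end Final
/-- Estimate (2.9): for the stopping family `𝓕` of `f` with top cube `Q₀` and parameter
`A = 4^{2/p'}`, one has `∑_{F' ∈ 𝓕, F' ⊆ F} ‖φ_{F'}‖_{L^p(σ;ℓ²)}^p ≤ 2 ‖φ_F‖_{L^p(σ;ℓ²)}^p`
for every `F ∈ 𝓕`. -/
theorem statement9 (p : ℝ) (hp : 2 ≤ p) (n : ℕ) (hn : 0 < n)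
    (σ : Measure (Fin n → ℝ)) [IsLocallyFiniteMeasure σ]
    (μ : (Fin n → ℝ) × ℝ → ℝ≥0∞) (hμ : Measurable μ)
    (hfin : ∀ Q : CubeIdx n, mixedNorm n σ (p/(p-1)) (boxFn n μ Q.1 Q.2) < ∞)
    (Q₀ : CubeIdx n) (f : (Fin n → ℝ) × ℝ → ℝ≥0∞) (hf : Measurable f)
    (hffin : boxInt n σ μ f Q₀.1 Q₀.2 < ∞) :
    ∀ F : CubeIdx n, fStop n σ μ f (p/(p-1)) ((4 : ℝ≥0∞) ^ (2/(p/(p-1)))) Q₀ F →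
      (∑' F' : {F' : CubeIdx n //
          fStop n σ μ f (p/(p-1)) ((4 : ℝ≥0∞) ^ (2/(p/(p-1)))) Q₀ F' ∧
          idxCube n F' ⊆ idxCube n F},
        mixedNorm n σ p (testFn n (p/(p-1)) μ F'.1.1 F'.1.2) ^ p)
      ≤ 2 * mixedNorm n σ p (testFn n (p/(p-1)) μ F.1 F.2) ^ p := by
  classical
  intro F hF
  have hp1 : (0:ℝ) < p - 1 := by linarith
  have hp0 : (0:ℝ) < p := by linarith
  have hp'1 : 1 < p/(p-1) := by rw [lt_div_iff₀ hp1]; linarith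
  have hp'2 : p/(p-1) ≤ 2 := by rw [div_le_iff₀ hp1]; linarith
  have hp'0 : 0 < p/(p-1) := lt_trans one_pos hp'1
  have hkey : (p/(p-1) - 1) * p = p/(p-1) := by field_simp; ring
  set p' : ℝ := p/(p-1) with hp'def
  set A : ℝ≥0∞ := (4 : ℝ≥0∞) ^ (2/p') with hAdef
  have hA1 : 1 ≤ A := by
    rw [hAdef]
    calc (1:ℝ≥0∞) = (4:ℝ≥0∞) ^ (0:ℝ) := ENNReal.rpow_zero.symm
      _ ≤ (4:ℝ≥0∞) ^ (2/p') := ENNReal.rpow_le_rpow_of_exponent_le (by norm_num) (by positivity)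
  have hcc : ∀ Q : CubeIdx n, mixedNorm n σ p (testFn n p' μ Q.1 Q.2) ^ p
      = ccMass n σ μ p' Q :=
    fun Q => norm_testFn_eq_cc hμ hp0 hp'0 hkey (ccMass_lt_top hp'0 (hfin Q))
  rw [tsum_congr (fun F' : {F' : CubeIdx n // fStop n σ μ f p' A Q₀ F' ∧
      idxCube n F' ⊆ idxCube n F} => hcc F'.1), hcc F]
  set T := Σ (m : ℕ), {Q // genSet n σ μ f p' A F m Q} with hT
  have hmem : ∀ F' : {F' : CubeIdx n // fStop n σ μ f p' A Q₀ F' ∧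
      idxCube n F' ⊆ idxCube n F}, ∃ m, genSet n σ μ f p' A F m F'.1 :=
    fun F' => exists_gen (fStop_reach hn hA1 hF F'.2.1 F'.2.2)
  set emb : {F' : CubeIdx n // fStop n σ μ f p' A Q₀ F' ∧
      idxCube n F' ⊆ idxCube n F} → T := fun F' =>
    ⟨Classical.choose (hmem F'), ⟨F'.1, Classical.choose_spec (hmem F')⟩⟩ with hemb
  have hinj : Function.Injective emb := by
    intro a b hab
    exact Subtype.ext (congrArg (fun z : T => (z.2.1 : CubeIdx n)) hab)
  have hgeom : ∑' m : ℕ, (4⁻¹ : ℝ≥0∞)^m ≤ 2 := by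
    calc ∑' m : ℕ, (4⁻¹ : ℝ≥0∞)^m ≤ ∑' m : ℕ, (2⁻¹ : ℝ≥0∞)^m := by
          refine ENNReal.tsum_le_tsum fun m => ?_
          refine pow_le_pow_left₀ (zero_le) ?_ m
          rw [ENNReal.inv_le_inv]
          norm_num
      _ = (1 - 2⁻¹)⁻¹ := ENNReal.tsum_geometric _
      _ = 2 := by rw [ENNReal.one_sub_inv_two, inv_inv]
  calc (∑' F' : {F' : CubeIdx n // fStop n σ μ f p' A Q₀ F' ∧
          idxCube n F' ⊆ idxCube n F}, ccMass n σ μ p' F'.1)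
      = ∑' F', (fun z : T => ccMass n σ μ p' z.2.1) (emb F') := tsum_congr fun F' => rfl
    _ ≤ ∑' z : T, ccMass n σ μ p' z.2.1 := tsum_comp_le_tsum_of_injective hinj _
    _ = ∑' m : ℕ, ∑' Q : {Q // genSet n σ μ f p' A F m Q}, ccMass n σ μ p' Q.1 :=
        ENNReal.tsum_sigma
          (β := fun m : ℕ => {Q // genSet n σ μ f p' A F m Q})
          (fun _ Q => ccMass n σ μ p' Q.1)
    _ ≤ ∑' m : ℕ, (4⁻¹ : ℝ≥0∞)^m * ccMass n σ μ p' F :=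
        ENNReal.tsum_le_tsum (gen_sum hn hμ hf hp'1 hp'2 hAdef hfin hffin hF)
    _ = (∑' m : ℕ, (4⁻¹ : ℝ≥0∞)^m) * ccMass n σ μ p' F := ENNReal.tsum_mul_right
    _ ≤ 2 * ccMass n σ μ p' F := mul_le_mul_left hgeom _

end
end
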